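/- arXiv:2011.14142 — 11 statements merged into one kernel-verified Lean document; each statement's English description precedes it below -/
import Mathlib

section
/- Let n ≥ 1, let 0 < c₁ < c₂ < ... < cₙ be real numbers and s₁ < s₂ < ... < sₙ be real numbers. Then the n×n matrix with (i,j)-entry c_j^{s_i} has rank n (equivalently, is invertible). -/
open Real Finset Matrix

/-- Key lemma: a function `t ↦ ∑ aᵢ t ^ sᵢ` with strictly increasing exponents that
vanishes at `n` distinct positive points has all coefficients zero. -/
lemma gv_key : ∀ (n : ℕ) (s : Fin n → ℝ), StrictMono s → ∀ (x : Fin n → ℝ), StrictMono x →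
    (∀ j, 0 < x j) → ∀ (a : Fin n → ℝ),
    (∀ j, ∑ i, a i * x j ^ s i = 0) → ∀ i, a i = 0 := by
  intro n
  induction n with
  | zero => intro _ _ _ _ _ _ _ i; exact absurd i.2 (by simp)
  | succ n ih =>
    intro s hs x hx hx0 a ha
    -- the function g and its derivative g'
    set g : ℝ → ℝ := fun t => ∑ i, a i * t ^ (s i - s 0) with hg
    set g' : ℝ → ℝ := fun t => ∑ i, a i * ((s i - s 0) * t ^ (s i - s 0 - 1)) with hg'
    have hderiv : ∀ t : ℝ, 0 < t → HasDerivAt g (g' t) t := by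
      intro t ht
      exact HasDerivAt.fun_sum fun i _ =>
        ((Real.hasDerivAt_rpow_const (p := s i - s 0) (Or.inl ht.ne')).const_mul (a i))
    have hgz : ∀ j, g (x j) = 0 := by
      intro j
      have hxj := hx0 j
      have : g (x j) = (∑ i, a i * x j ^ s i) / x j ^ s 0 := by
        rw [Finset.sum_div]
        refine Finset.sum_congr rfl fun i _ => ?_
        rw [Real.rpow_sub hxj, mul_div_assoc]
      rw [this, ha j, zero_div]
    -- Rolle between consecutive points
    have hroll : ∀ j : Fin n, ∃ t,
        t ∈ Set.Ioo (x j.castSucc) (x j.succ) ∧ g' t = 0 := by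
      intro j
      have hlt : x j.castSucc < x j.succ := hx Fin.castSucc_lt_succ
      have hcont : ContinuousOn g (Set.Icc (x j.castSucc) (x j.succ)) := by
        intro t ht
        have ht0 : 0 < t := lt_of_lt_of_le (hx0 j.castSucc) ht.1
        exact ((hderiv t ht0).continuousAt).continuousWithinAt
      have heq : g (x j.castSucc) = g (x j.succ) := by
        rw [hgz, hgz]
      obtain ⟨t, ht, ht0⟩ := exists_hasDerivAt_eq_zero hlt hcont heq
        (fun t ht => hderiv t (lt_trans (hx0 j.castSucc) ht.1))
      exact ⟨t, ht, ht0⟩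
    choose y hy hy0 using hroll
    have hy0' : ∀ j, 0 < y j := fun j => lt_trans (hx0 j.castSucc) (hy j).1
    have hymono : StrictMono y := by
      intro j k hjk
      have h1 : y j < x j.succ := (hy j).2
      have h2 : x j.succ ≤ x k.castSucc :=
        hx.monotone (Fin.succ_le_castSucc_iff.mpr hjk)
      exact lt_of_lt_of_le h1 (h2.trans (hy k).1.le)
    -- apply IH to the derivative
    set s' : Fin n → ℝ := fun i => s i.succ - s 0 - 1 with hs'
    set a' : Fin n → ℝ := fun i => a i.succ * (s i.succ - s 0) with ha'
    have hs'mono : StrictMono s' := fun i j hij => by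
      simp only [hs']
      have := hs (Fin.succ_lt_succ_iff.mpr hij)
      linarith
    have ha'z : ∀ j, ∑ i, a' i * y j ^ s' i = 0 := by
      intro j
      have h0 : ∑ i : Fin (n+1), a i * ((s i - s 0) * (y j) ^ (s i - s 0 - 1)) = 0 := hy0 j
      rw [Fin.sum_univ_succ] at h0
      simp only [sub_self, zero_mul, mul_zero, zero_add] at h0
      rw [← h0]
      refine Finset.sum_congr rfl fun i _ => ?_
      simp only [ha', hs']
      ring
    have hzero : ∀ i : Fin n, a' i = 0 := ih s' hs'mono y hymono hy0' a' ha'z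
    have hsucc : ∀ i : Fin n, a i.succ = 0 := by
      intro i
      have hpos : 0 < s i.succ - s 0 := by
        have := hs (Fin.succ_pos i)
        linarith
      have := hzero i
      simp only [ha'] at this
      exact (mul_eq_zero.mp this).resolve_right hpos.ne'
    have h0 : a 0 = 0 := by
      have := ha 0
      rw [Fin.sum_univ_succ] at this
      simp only [hsucc, zero_mul, Finset.sum_const_zero, add_zero] at this
      have hpow : (0:ℝ) < x 0 ^ s 0 := Real.rpow_pos_of_pos (hx0 0) _
      exact (mul_eq_zero.mp this).resolve_right hpow.ne'
    intro i
    rcases Fin.eq_zero_or_eq_succ i with h | ⟨j, rfl⟩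
    · rw [h]; exact h0
    · exact hsucc j

/-- Generalized Vandermonde matrix `(c_j ^ s_i)` with `0 < c₁ < ... < cₙ` and
`s₁ < ... < sₙ` has full rank `n`. -/
theorem generalized_vandermonde_rank (n : ℕ) (hn : 1 ≤ n) (c s : Fin n → ℝ)
    (hc0 : ∀ j, 0 < c j) (hc : StrictMono c) (hs : StrictMono s) :
    (Matrix.of fun i j : Fin n => (c j) ^ (s i)).rank = n := by
  set A : Matrix (Fin n) (Fin n) ℝ := Matrix.of fun i j : Fin n => (c j) ^ (s i) with hA
  have hdet : A.det ≠ 0 := by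
    intro hdet0
    have hdetT : Aᵀ.det = 0 := by rw [Matrix.det_transpose]; exact hdet0
    obtain ⟨v, hv, hmul⟩ := (Matrix.exists_mulVec_eq_zero_iff).mpr hdetT
    apply hv
    funext i
    refine gv_key n s hs c hc hc0 v (fun j => ?_) i
    have := congrFun hmul j
    simp only [Matrix.mulVec, dotProduct, Matrix.transpose_apply, Matrix.of_apply,
      Pi.zero_apply] at this
    rw [← this]
    exact Finset.sum_congr rfl fun i _ => mul_comm _ _
  have hU : IsUnit A := (Matrix.isUnit_iff_isUnit_det A).mpr (isUnit_iff_ne_zero.mpr hdet)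
  rw [Matrix.rank_of_isUnit A hU, Fintype.card_fin]
end

section
/- Let n ≥ 1, let 0 < c₁ < ... < cₙ and s₁ < ... < sₙ be reals, and let λ₁,...,λₙ be reals, not all zero. Then the function x ↦ Σᵢ λᵢ x^{sᵢ} has fewer than n zeros in (0,∞); in particular it cannot vanish at all of c₁,...,cₙ. -/
open Set

private lemma rolle_subset_count {g : ℝ → ℝ} {Z' : Set ℝ}
    (hcont : ContinuousOn g (Set.Ioi 0))
    (hd : ∀ x : ℝ, 0 < x → deriv g x = 0 → x ∈ Z') :
    ∀ (k : ℕ) (T : Finset ℝ), T.card = k → (∀ x ∈ T, 0 < x ∧ g x = 0) →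
      ∃ S : Finset ℝ, ↑S ⊆ Z' ∧ T.card ≤ S.card + 1 ∧ ∀ x ∈ S, ∃ y ∈ T, x < y := by
  intro k
  induction k with
  | zero =>
    intro T hT _
    exact ⟨∅, by simp, by simp [hT], by simp⟩
  | succ k ih =>
    intro T hT hTZ
    have hne : T.Nonempty := Finset.card_pos.mp (by omega)
    set M := T.max' hne with hMdef
    have hM : M ∈ T := T.max'_mem hne
    set T' := T.erase M with hT'def
    have hT' : T'.card = k := by
      rw [hT'def, Finset.card_erase_of_mem hM, hT]
      omega
    obtain ⟨S', hS'Z, hS'c, hS'lt⟩ := ih T' hT'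
      (fun x hx => hTZ x (Finset.mem_of_mem_erase hx))
    rcases T'.eq_empty_or_nonempty with hE | hne'
    · have hS' : S' = ∅ := by
        rcases Finset.eq_empty_or_nonempty S' with h | ⟨x, hx⟩
        · exact h
        · obtain ⟨y, hy, _⟩ := hS'lt x hx
          simp [hE] at hy
      have : T'.card = 0 := by simp [hE]
      refine ⟨∅, by simp, ?_, by simp⟩
      omega
    · set a := T'.max' hne' with hadef
      have haT' : a ∈ T' := T'.max'_mem hne'
      have haT : a ∈ T := Finset.mem_of_mem_erase haT'
      have haM : a < M := lt_of_le_of_ne (T.le_max' a haT)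
        (Finset.ne_of_mem_erase haT')
      have ha0 : 0 < a := (hTZ a haT).1
      obtain ⟨c, hc, hdc⟩ := exists_deriv_eq_zero haM
        (hcont.mono (fun x hx => lt_of_lt_of_le ha0 hx.1))
        (by rw [(hTZ a haT).2, (hTZ M (T.max'_mem hne)).2])
      have hc0 : 0 < c := ha0.trans hc.1
      have hcZ' : c ∈ Z' := hd c hc0 hdc
      have hcS' : c ∉ S' := by
        intro hmem
        obtain ⟨y, hy, hxy⟩ := hS'lt c hmem
        exact absurd (hxy.trans_le (T'.le_max' y hy)) (not_lt.mpr hc.1.le)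
      refine ⟨insert c S', ?_, ?_, ?_⟩
      · intro x hx
        rcases Finset.mem_insert.mp hx with rfl | hx
        · exact hcZ'
        · exact hS'Z hx
      · rw [Finset.card_insert_of_notMem hcS']
        omega
      · intro x hx
        rcases Finset.mem_insert.mp hx with rfl | hx
        · exact ⟨M, hM, hc.2⟩
        · obtain ⟨y, hy, hxy⟩ := hS'lt x hx
          exact ⟨y, Finset.mem_of_mem_erase hy, hxy⟩

private lemma rolle_count {g : ℝ → ℝ} {Z' : Set ℝ} (hZ' : Z'.Finite)
    (hcont : ContinuousOn g (Set.Ioi 0))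
    (hd : ∀ x : ℝ, 0 < x → deriv g x = 0 → x ∈ Z') :
    {x : ℝ | 0 < x ∧ g x = 0}.Finite ∧
      {x : ℝ | 0 < x ∧ g x = 0}.ncard ≤ Z'.ncard + 1 := by
  set Z := {x : ℝ | 0 < x ∧ g x = 0} with hZdef
  have key : ∀ T : Finset ℝ, (∀ x ∈ T, 0 < x ∧ g x = 0) → T.card ≤ Z'.ncard + 1 := by
    intro T hT
    obtain ⟨S, hSZ, hSc, _⟩ := rolle_subset_count hcont hd T.card T rfl hT
    have : S.card ≤ Z'.ncard := by
      rw [← Set.ncard_coe_finset S]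
      exact Set.ncard_le_ncard hSZ hZ'
    omega
  have hZfin : Z.Finite := by
    by_contra h
    obtain ⟨T, hTZ, hTc⟩ := Set.Infinite.exists_subset_card_eq h (Z'.ncard + 2)
    have := key T (fun x hx => hTZ hx)
    omega
  refine ⟨hZfin, ?_⟩
  have := key hZfin.toFinset (fun x hx => by
    simpa [hZdef] using (Set.Finite.mem_toFinset hZfin).mp hx)
  rwa [← Set.ncard_eq_toFinset_card Z hZfin] at this

private lemma main_count : ∀ (n : ℕ) (s l : Fin n → ℝ), StrictMono s → l ≠ 0 →
    {x : ℝ | 0 < x ∧ ∑ i, l i * x ^ (s i) = 0}.Finite ∧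
    {x : ℝ | 0 < x ∧ ∑ i, l i * x ^ (s i) = 0}.ncard < n := by
  intro n
  induction n with
  | zero => intro s l _ hl; exact absurd (Subsingleton.elim l 0) hl
  | succ n ih =>
    intro s l hs hl
    by_cases h0 : ∀ i : Fin n, l i.succ = 0
    · have hl0 : l 0 ≠ 0 := by
        intro h
        apply hl
        funext i
        exact Fin.cases h h0 i
      have hZ : {x : ℝ | 0 < x ∧ ∑ i, l i * x ^ (s i) = 0} = ∅ := by
        ext x
        simp only [Set.mem_setOf_eq, Set.mem_empty_iff_false, iff_false, not_and]
        intro hx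
        rw [Fin.sum_univ_succ]
        have hrest : ∑ i : Fin n, l i.succ * x ^ (s i.succ) = 0 :=
          Finset.sum_eq_zero fun i _ => by rw [h0 i]; ring
        rw [hrest, add_zero]
        exact mul_ne_zero hl0 (Real.rpow_pos_of_pos hx _).ne'
      rw [hZ]
      exact ⟨Set.finite_empty, by simp⟩
    · push_neg at h0
      obtain ⟨i0, hi0⟩ := h0
      set m : Fin n → ℝ := fun i => l i.succ * (s i.succ - s 0) with hmdef
      set t : Fin n → ℝ := fun i => s i.succ - s 0 - 1 with htdef
      have hsucc : ∀ i : Fin n, s 0 < s i.succ := fun i => hs (Fin.succ_pos i)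
      have hm : m ≠ 0 := by
        intro h
        have := congrFun h i0
        simp only [hmdef, Pi.zero_apply] at this
        rcases mul_eq_zero.mp this with h' | h'
        · exact hi0 h'
        · exact absurd (sub_eq_zero.mp h').symm (hsucc i0).ne
      have ht : StrictMono t := fun i j hij => by
        simp only [htdef]
        have : s i.succ < s j.succ := hs (Fin.succ_lt_succ_iff.mpr hij)
        linarith
      obtain ⟨hZ'fin, hZ'card⟩ := ih t m ht hm
      set g : ℝ → ℝ := fun x => ∑ i, l i * x ^ (s i - s 0) with hgdef
      have hder : ∀ x : ℝ, 0 < x →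
          HasDerivAt g (∑ i : Fin n, m i * x ^ (t i)) x := by
        intro x hx
        have h1 : HasDerivAt g
            (∑ i : Fin (n+1), l i * ((s i - s 0) * x ^ (s i - s 0 - 1))) x := by
          apply HasDerivAt.fun_sum
          intro i _
          exact (Real.hasDerivAt_rpow_const (Or.inl hx.ne')).const_mul (l i)
        convert h1 using 1
        rw [Fin.sum_univ_succ]
        simp only [sub_self, zero_mul, mul_zero, zero_add]
        exact Finset.sum_congr rfl fun i _ => by simp only [hmdef, htdef]; ring
      have hcont : ContinuousOn g (Set.Ioi 0) := fun x hx =>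
        ((hder x hx).continuousAt).continuousWithinAt
      have hZeq : {x : ℝ | 0 < x ∧ ∑ i, l i * x ^ (s i) = 0}
          = {x : ℝ | 0 < x ∧ g x = 0} := by
        ext x
        simp only [Set.mem_setOf_eq, and_congr_right_iff]
        intro hx
        have hfg : ∑ i, l i * x ^ (s i) = x ^ (s 0) * g x := by
          rw [hgdef, Finset.mul_sum]
          refine Finset.sum_congr rfl fun i _ => ?_
          have h2 : x ^ (s i) = x ^ (s 0) * x ^ (s i - s 0) := by
            rw [← Real.rpow_add hx]; congr 1; ring
          rw [h2]; ring
        rw [hfg]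
        constructor
        · intro h
          rcases mul_eq_zero.mp h with h' | h'
          · exact absurd h' (Real.rpow_pos_of_pos hx _).ne'
          · exact h'
        · intro h; rw [h, mul_zero]
      have hd : ∀ x : ℝ, 0 < x → deriv g x = 0 →
          x ∈ {x : ℝ | 0 < x ∧ ∑ i, m i * x ^ (t i) = 0} := by
        intro x hx hdx
        exact ⟨hx, by rw [← (hder x hx).deriv]; exact hdx⟩
      obtain ⟨hfin, hcard⟩ := rolle_count hZ'fin hcont hd
      rw [hZeq]
      exact ⟨hfin, by omega⟩

/-- A nonzero real linear combination `x ↦ Σᵢ lᵢ x^{sᵢ}` of distinct real power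
functions has fewer than `n` zeros in `(0,∞)`; in particular it cannot vanish at
all of the points `0 < c₁ < ... < cₙ`. -/
theorem exponential_polynomial_few_zeros (n : ℕ) (hn : 1 ≤ n) (c s l : Fin n → ℝ)
    (hc0 : ∀ j, 0 < c j) (hc : StrictMono c) (hs : StrictMono s) (hl : l ≠ 0) :
    ({x : ℝ | 0 < x ∧ ∑ i, l i * x ^ (s i) = 0}.Finite ∧
      {x : ℝ | 0 < x ∧ ∑ i, l i * x ^ (s i) = 0}.ncard < n) ∧
    ∃ j, ∑ i, l i * (c j) ^ (s i) ≠ 0 := by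
  obtain ⟨hfin, hcard⟩ := main_count n s l hs hl
  refine ⟨⟨hfin, hcard⟩, ?_⟩
  by_contra h
  push_neg at h
  have hsub : Set.range c ⊆ {x : ℝ | 0 < x ∧ ∑ i, l i * x ^ (s i) = 0} := by
    rintro x ⟨j, rfl⟩
    exact ⟨hc0 j, h j⟩
  have h1 : (Set.range c).ncard = n := by
    rw [← Set.image_univ, Set.ncard_image_of_injective _ hc.injective,
      Set.ncard_univ]
    simp
  have h2 : (Set.range c).ncard ≤
      {x : ℝ | 0 < x ∧ ∑ i, l i * x ^ (s i) = 0}.ncard :=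
    Set.ncard_le_ncard hsub hfin
  omega
end

section
/- For every odd positive integer ℓ and every complex number z with Re(z) ≥ 0, we have Re(z^ℓ) ≤ ℓ·|z|^{ℓ-1}·Re(z). -/
lemma abs_im_pow_le (w : ℂ) : ∀ n : ℕ, |(w ^ n).im| ≤ n * ‖w‖ ^ (n - 1) * |w.im|
  | 0 => by simp
  | 1 => by simp
  | (n+2) => by
    have ih := abs_im_pow_le w (n+1)
    have h1 : (w ^ (n+2)).im = w.re * (w^(n+1)).im + w.im * (w^(n+1)).re := by
      rw [pow_succ']; simp [Complex.mul_im]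
    have hre : |w.re| ≤ ‖w‖ := Complex.abs_re_le_norm w
    have hre2 : |(w^(n+1)).re| ≤ ‖w‖ ^ (n+1) := by
      simpa [map_pow] using Complex.abs_re_le_norm (w^(n+1))
    have him : |w.im| ≤ ‖w‖ := Complex.abs_im_le_norm w
    calc |(w ^ (n+2)).im| ≤ |w.re| * |(w^(n+1)).im| + |w.im| * |(w^(n+1)).re| := by
          rw [h1]; exact (abs_add_le _ _).trans (by rw [abs_mul, abs_mul])
      _ ≤ ‖w‖ * ((n+1) * ‖w‖ ^ n * |w.im|)
            + |w.im| * ‖w‖ ^ (n+1) := by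
          gcongr
          simpa using ih
      _ = ((n:ℝ)+2) * ‖w‖ ^ (n+1) * |w.im| := by ring
      _ = ((n+2 : ℕ) : ℝ) * ‖w‖ ^ ((n+2) - 1) * |w.im| := by push_cast; ring

/-- For odd positive `ℓ` and `z : ℂ` with `Re z ≥ 0`, `Re(z^ℓ) ≤ ℓ·|z|^{ℓ-1}·Re z`. -/
theorem re_pow_le_of_odd (ℓ : ℕ) (hodd : Odd ℓ) (hpos : 0 < ℓ) (z : ℂ) (hz : 0 ≤ z.re) :
    (z ^ ℓ).re ≤ (ℓ : ℝ) * ‖z‖ ^ (ℓ - 1) * z.re := by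
  obtain ⟨k, hk⟩ := hodd
  have hI : Complex.I ^ ℓ = (-1 : ℂ)^k * Complex.I := by
    rw [hk, pow_succ, pow_mul, Complex.I_sq]
  have key := abs_im_pow_le (z * Complex.I) ℓ
  have habs : ‖z * Complex.I‖ = ‖z‖ := by
    simp
  have him : (z * Complex.I).im = z.re := by simp
  have h1 : ((z * Complex.I) ^ ℓ).im = (-1 : ℝ)^k * (z ^ ℓ).re := by
    have e : ((-1:ℂ)^k) = (((-1:ℝ)^k : ℝ) : ℂ) := by push_cast; ring
    have er : ((-1:ℂ)^k).re = (-1:ℝ)^k := by rw [e, Complex.ofReal_re]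
    have ei : ((-1:ℂ)^k).im = 0 := by rw [e, Complex.ofReal_im]
    rw [mul_pow, hI]
    simp only [Complex.mul_im, Complex.mul_re, Complex.I_re, Complex.I_im, er, ei]
    ring
  have h2 : |((z * Complex.I) ^ ℓ).im| = |(z ^ ℓ).re| := by
    rw [h1, abs_mul, abs_pow, abs_neg, abs_one, one_pow, one_mul]
  rw [habs, him, h2, abs_of_nonneg hz] at key
  exact (le_abs_self _).trans key
end

section
/- For every real p > 1, the function z ↦ ⌊z⁻¹⌋·z^p + (1 − ⌊z⁻¹⌋·z)^p is strictly increasing on (0,1]. -/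
private lemma gmono (p : ℝ) (hp : 1 < p) (n : ℝ) (hn : 1 ≤ n) :
    StrictMonoOn (fun z : ℝ => n * z ^ p + (1 - n * z) ^ p)
      (Set.Icc (n + 1)⁻¹ n⁻¹) := by
  have hp0 : 0 < p := lt_trans one_pos hp
  have hn0 : 0 < n := lt_of_lt_of_le one_pos hn
  apply strictMonoOn_of_deriv_pos (convex_Icc _ _)
  · apply ContinuousOn.add
    · exact (continuousOn_id.rpow_const (fun x _ => Or.inr hp0.le)).const_smul n
    · exact ((continuousOn_const.sub (continuousOn_const.mul continuousOn_id)).rpow_const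
        (fun x _ => Or.inr hp0.le))
  · intro x hx
    rw [interior_Icc] at hx
    obtain ⟨hx1, hx2⟩ := hx
    have hxpos : 0 < x := lt_trans (by positivity) hx1
    have h1nx : 0 < 1 - n * x := by
      have : n * x < 1 := by
        have := (inv_strictAnti₀ hxpos hx2)  -- maybe wrong; use mul
        nlinarith [mul_lt_mul_of_pos_left hx2 hn0, mul_inv_cancel₀ hn0.ne']
      linarith
    have hlt : 1 - n * x < x := by
      have : 1 < (n + 1) * x := by
        have := mul_lt_mul_of_pos_left hx1 (by positivity : (0:ℝ) < n + 1)
        rwa [mul_inv_cancel₀ (by positivity : (n+1:ℝ) ≠ 0)] at this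
      nlinarith
    have h1 : HasDerivAt (fun z : ℝ => z ^ p) (p * x ^ (p - 1)) x :=
      Real.hasDerivAt_rpow_const (Or.inl hxpos.ne')
    have h2 : HasDerivAt (fun z : ℝ => 1 - n * z) (-n) x := by
      simpa using ((hasDerivAt_id x).const_mul n).const_sub 1
    have h3 : HasDerivAt (fun z : ℝ => (1 - n * z) ^ p)
        (p * (1 - n * x) ^ (p - 1) * -n) x :=
      by have := (Real.hasDerivAt_rpow_const (p := p) (Or.inl h1nx.ne')).comp x h2; exact this
    have h4 : HasDerivAt (fun z : ℝ => n * z ^ p + (1 - n * z) ^ p)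
        (n * (p * x ^ (p - 1)) + p * (1 - n * x) ^ (p - 1) * -n) x :=
      (h1.const_mul n).add h3
    rw [h4.deriv]
    have hkey : (1 - n * x) ^ (p - 1) < x ^ (p - 1) :=
      Real.rpow_lt_rpow h1nx.le hlt (by linarith)
    nlinarith [mul_pos (mul_pos hn0 hp0) (sub_pos.mpr hkey)]

private lemma gval_right (p : ℝ) (hp : 1 < p) (n : ℝ) (hn : 1 ≤ n) :
    n * (n⁻¹) ^ p + (1 - n * n⁻¹) ^ p = n ^ (1 - p) := by
  have hn0 : 0 < n := lt_of_lt_of_le one_pos hn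
  rw [mul_inv_cancel₀ hn0.ne', sub_self, Real.zero_rpow (by positivity),
    Real.inv_rpow hn0.le, Real.rpow_sub hn0, Real.rpow_one, add_zero, div_eq_mul_inv]


private lemma gval_left (p : ℝ) (hp : 1 < p) (n : ℝ) (hn : 1 ≤ n) :
    n * ((n + 1)⁻¹) ^ p + (1 - n * (n + 1)⁻¹) ^ p = (n + 1) ^ (1 - p) := by
  have hn1 : (0:ℝ) < n + 1 := by linarith
  have h : 1 - n * (n + 1)⁻¹ = (n + 1)⁻¹ := by field_simp; ring
  rw [h, Real.inv_rpow hn1.le, Real.rpow_sub hn1, Real.rpow_one]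
  have hne : (n + 1) ^ p ≠ 0 := by positivity
  field_simp

/-- For real `p > 1`, the function `z ↦ ⌊z⁻¹⌋·z^p + (1 − ⌊z⁻¹⌋·z)^p` is
strictly increasing on `(0,1]`. -/
theorem floor_rpow_strictMonoOn (p : ℝ) (hp : 1 < p) :
    StrictMonoOn (fun z : ℝ => (⌊z⁻¹⌋ : ℝ) * z ^ p + (1 - (⌊z⁻¹⌋ : ℝ) * z) ^ p)
      (Set.Ioc 0 1) := by
  intro z1 hz1 z2 hz2 hlt
  obtain ⟨hz1p, hz1le⟩ := hz1
  obtain ⟨hz2p, hz2le⟩ := hz2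
  simp only []
  set n1 : ℤ := ⌊z1⁻¹⌋ with hdef1
  set n2 : ℤ := ⌊z2⁻¹⌋ with hdef2
  have hn1 : 1 ≤ n1 := by
    rw [hdef1, Int.le_floor]
    push_cast
    exact (one_le_inv₀ hz1p).2 hz1le
  have hn2 : 1 ≤ n2 := by
    rw [hdef2, Int.le_floor]
    push_cast
    exact (one_le_inv₀ hz2p).2 hz2le
  have hc1 : (1:ℝ) ≤ (n1:ℝ) := by exact_mod_cast hn1
  have hc2 : (1:ℝ) ≤ (n2:ℝ) := by exact_mod_cast hn2
  have hf1 : (n1:ℝ) ≤ z1⁻¹ := Int.floor_le _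
  have hf2 : (n2:ℝ) ≤ z2⁻¹ := Int.floor_le _
  have hg1 : z1⁻¹ < (n1:ℝ) + 1 := Int.lt_floor_add_one _
  have hg2 : z2⁻¹ < (n2:ℝ) + 1 := Int.lt_floor_add_one _
  have h1r : z1 ≤ ((n1:ℝ))⁻¹ := by
    rw [← one_div, le_div_iff₀ (by linarith)]
    nlinarith [mul_le_mul_of_nonneg_left hf1 hz1p.le, mul_inv_cancel₀ hz1p.ne']
  have h2r : z2 ≤ ((n2:ℝ))⁻¹ := by
    rw [← one_div, le_div_iff₀ (by linarith)]
    nlinarith [mul_le_mul_of_nonneg_left hf2 hz2p.le, mul_inv_cancel₀ hz2p.ne']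
  have h1l : ((n1:ℝ) + 1)⁻¹ < z1 := by
    rw [← one_div, div_lt_iff₀ (by linarith)]
    nlinarith [mul_lt_mul_of_pos_left hg1 hz1p, mul_inv_cancel₀ hz1p.ne']
  have h2l : ((n2:ℝ) + 1)⁻¹ < z2 := by
    rw [← one_div, div_lt_iff₀ (by linarith)]
    nlinarith [mul_lt_mul_of_pos_left hg2 hz2p, mul_inv_cancel₀ hz2p.ne']
  have hmono : n2 ≤ n1 := by
    apply Int.floor_le_floor
    gcongr
  rcases eq_or_lt_of_le hmono with heq | hlt2
  · rw [← heq]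
    exact gmono p hp (n2:ℝ) hc2 ⟨by rw [heq]; exact h1l.le, by rw [heq]; exact h1r⟩
      ⟨h2l.le, h2r⟩ hlt
  · have hii : ((n1:ℝ) + 1)⁻¹ ≤ ((n1:ℝ))⁻¹ := by
      apply inv_anti₀ (by linarith) (by linarith)
    have key1 : (n1:ℝ) * z1 ^ p + (1 - (n1:ℝ) * z1) ^ p ≤ (n1:ℝ) ^ (1 - p) := by
      rw [← gval_right p hp (n1:ℝ) hc1]
      exact (gmono p hp (n1:ℝ) hc1).monotoneOn ⟨h1l.le, h1r⟩ ⟨hii, le_refl _⟩ h1r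
    have key2 : ((n1:ℝ)) ^ (1 - p) ≤ ((n2:ℝ) + 1) ^ (1 - p) := by
      apply Real.rpow_le_rpow_of_nonpos (by linarith)
      · exact_mod_cast hlt2
      · linarith
    have key4 : (n2:ℝ) * (((n2:ℝ) + 1)⁻¹) ^ p + (1 - (n2:ℝ) * ((n2:ℝ) + 1)⁻¹) ^ p
        < (n2:ℝ) * z2 ^ p + (1 - (n2:ℝ) * z2) ^ p := by
      have hii2 : ((n2:ℝ) + 1)⁻¹ ≤ ((n2:ℝ))⁻¹ := by
        apply inv_anti₀ (by linarith) (by linarith)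
      exact gmono p hp (n2:ℝ) hc2 ⟨le_refl _, hii2⟩ ⟨h2l.le, h2r⟩ h2l
    have key3 := gval_left p hp (n2:ℝ) hc2
    linarith
end

section
/- For every real p > 1, the function z ↦ ⌊z⁻¹⌋·z^p + (1 − ⌊z⁻¹⌋·z)^p is a continuous bijection from (0,1] onto (0,1]. -/
open Set Real Filter Topology

namespace FloorRpowAux

/-- The fixed-index piece function `z ↦ c z^p + (1 - c z)^p`. -/
noncomputable def g (p c z : ℝ) : ℝ := c * z ^ p + (1 - c * z) ^ p

/-- The function of the theorem. -/
noncomputable def f (p z : ℝ) : ℝ := (⌊z⁻¹⌋ : ℝ) * z ^ p + (1 - (⌊z⁻¹⌋ : ℝ) * z) ^ p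

lemma g_hasDerivAt (p : ℝ) (hp : 1 ≤ p) (c z : ℝ) :
    HasDerivAt (g p c) (c * (p * z ^ (p - 1)) + p * (1 - c * z) ^ (p - 1) * (-c)) z := by
  have h1 := (Real.hasDerivAt_rpow_const (p := p) (x := z) (Or.inr hp)).const_mul c
  have h2 : HasDerivAt (fun z : ℝ => 1 - c * z) (-c) z := by
    simpa using ((hasDerivAt_id z).const_mul c).const_sub 1
  have h3 := (Real.hasDerivAt_rpow_const (p := p) (x := 1 - c * z) (Or.inr hp)).comp z h2
  exact h1.add h3

lemma g_continuous (p : ℝ) (hp : 1 ≤ p) (c : ℝ) : Continuous (g p c) := by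
  have : Differentiable ℝ (g p c) := fun z => (g_hasDerivAt p hp c z).differentiableAt
  exact this.continuous

lemma g_strictMonoOn (p : ℝ) (hp : 1 < p) (c : ℝ) (hc : 1 ≤ c) :
    StrictMonoOn (g p c) (Icc (c + 1)⁻¹ c⁻¹) := by
  have hc0 : 0 < c := lt_of_lt_of_le one_pos hc
  apply strictMonoOn_of_deriv_pos (convex_Icc _ _)
    (g_continuous p hp.le c).continuousOn
  intro z hz
  rw [interior_Icc] at hz
  rw [(g_hasDerivAt p hp.le c z).deriv]
  have hz1 : 0 < 1 - c * z := by
    have : c * z < c * c⁻¹ := mul_lt_mul_of_pos_left hz.2 hc0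
    rw [mul_inv_cancel₀ hc0.ne'] at this
    linarith
  have hz2 : 1 - c * z < z := by
    have h1 : (c + 1)⁻¹ * (c + 1) < z * (c + 1) :=
      mul_lt_mul_of_pos_right hz.1 (by linarith)
    rw [inv_mul_cancel₀ (by linarith : c + 1 ≠ 0)] at h1
    nlinarith
  have key : (1 - c * z) ^ (p - 1) < z ^ (p - 1) :=
    Real.rpow_lt_rpow hz1.le hz2 (by linarith)
  have hp0 : 0 < p := by linarith
  nlinarith [mul_pos hc0 hp0, mul_pos (mul_pos hc0 hp0) (sub_pos.2 key)]

lemma g_val_right (p : ℝ) (hp : 1 < p) (c : ℝ) (hc : 0 < c) :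
    g p c c⁻¹ = c ^ (1 - p) := by
  unfold g
  rw [mul_inv_cancel₀ hc.ne', sub_self, Real.zero_rpow (by linarith),
    Real.inv_rpow hc.le, ← Real.rpow_neg hc.le,
    show (1:ℝ) - p = 1 + -p by ring, Real.rpow_add hc, Real.rpow_one]
  ring

lemma g_val_left (p : ℝ) (hp : 1 < p) (c : ℝ) (hc : 0 < c) :
    g p c (c + 1)⁻¹ = (c + 1) ^ (1 - p) := by
  unfold g
  have hc1 : (0:ℝ) < c + 1 := by linarith
  have h1 : 1 - c * (c + 1)⁻¹ = (c + 1)⁻¹ := by field_simp; ring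
  rw [h1, Real.inv_rpow hc1.le, ← Real.rpow_neg hc1.le,
    show (1:ℝ) - p = 1 + -p by ring, Real.rpow_add hc1, Real.rpow_one]
  ring

lemma floor_eq (n : ℤ) (hn : 1 ≤ n) (z : ℝ) (hz : z ∈ Ioc ((n : ℝ) + 1)⁻¹ (n : ℝ)⁻¹) :
    ⌊z⁻¹⌋ = n := by
  have hn0 : (0:ℝ) < n := by exact_mod_cast hn
  have hz0 : 0 < z := lt_trans (by positivity) hz.1
  rw [Int.floor_eq_iff]
  constructor
  · exact (le_inv_comm₀ hn0 hz0).2 hz.2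
  · exact (inv_lt_comm₀ (by linarith : (0:ℝ) < (n:ℝ) + 1) hz0).1 hz.1

lemma f_eq_g (p : ℝ) (hp : 1 < p) (n : ℤ) (hn : 1 ≤ n) (z : ℝ)
    (hz : z ∈ Icc ((n : ℝ) + 1)⁻¹ (n : ℝ)⁻¹) :
    f p z = g p n z := by
  rcases eq_or_lt_of_le hz.1 with h | h
  · have hn1 : (0:ℝ) < (n:ℝ) + 1 := by positivity
    have hzinv : z⁻¹ = ((n + 1 : ℤ) : ℝ) := by rw [← h]; push_cast; rw [inv_inv]
    have hfl : ⌊z⁻¹⌋ = n + 1 := by rw [hzinv, Int.floor_intCast]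
    unfold f
    rw [hfl]
    unfold g
    have h1 : 1 - ((n:ℝ) + 1) * z = 0 := by
      rw [← h, mul_inv_cancel₀ hn1.ne', sub_self]
    have h2 : 1 - (n:ℝ) * z = z := by
      have : 1 - (n:ℝ) * z = 1 - ((n:ℝ) + 1) * z + z := by ring
      rw [this, h1, zero_add]
    push_cast
    rw [h1, h2, Real.zero_rpow (by linarith)]
    ring
  · unfold f
    rw [floor_eq n hn z ⟨h, hz.2⟩]
    rfl

lemma mem_piece (z : ℝ) (hz : z ∈ Ioc (0:ℝ) 1) :
    1 ≤ ⌊z⁻¹⌋ ∧ z ∈ Ioc ((⌊z⁻¹⌋ : ℝ) + 1)⁻¹ (⌊z⁻¹⌋ : ℝ)⁻¹ := by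
  have hz0 : 0 < z := hz.1
  have h1 : (1:ℝ) ≤ z⁻¹ := (one_le_inv_iff₀).2 ⟨hz0, hz.2⟩
  have hn : 1 ≤ ⌊z⁻¹⌋ := by
    exact_mod_cast Int.le_floor.2 (by exact_mod_cast h1)
  have hn0 : (0:ℝ) < (⌊z⁻¹⌋ : ℝ) := by exact_mod_cast hn
  refine ⟨hn, ?_, ?_⟩
  · exact (inv_lt_comm₀ (by linarith) hz0).2 (by exact_mod_cast Int.lt_floor_add_one z⁻¹)
  · exact (le_inv_comm₀ hn0 hz0).1 (Int.floor_le z⁻¹)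

lemma piece_subset (n : ℤ) (hn : 1 ≤ n) :
    Icc ((n : ℝ) + 1)⁻¹ (n : ℝ)⁻¹ ⊆ Ioc (0:ℝ) 1 := by
  have hn0 : (0:ℝ) < (n:ℝ) := by exact_mod_cast hn
  intro x hx
  constructor
  · exact lt_of_lt_of_le (by positivity) hx.1
  · calc x ≤ (n:ℝ)⁻¹ := hx.2
      _ ≤ 1 := by rw [inv_le_one_iff₀]; right; exact_mod_cast hn

lemma ab_le (n : ℤ) (hn : 1 ≤ n) : ((n : ℝ) + 1)⁻¹ ≤ (n : ℝ)⁻¹ := by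
  have hn0 : (0:ℝ) < (n:ℝ) := by exact_mod_cast hn
  gcongr
  · linarith

lemma f_bounds (p : ℝ) (hp : 1 < p) (z : ℝ) (hz : z ∈ Ioc (0:ℝ) 1) :
    ((⌊z⁻¹⌋ : ℝ) + 1) ^ (1 - p) < f p z ∧ f p z ≤ (⌊z⁻¹⌋ : ℝ) ^ (1 - p) := by
  obtain ⟨hn, hmem⟩ := mem_piece z hz
  set n := ⌊z⁻¹⌋ with hndef
  have hn1 : (1:ℝ) ≤ (n:ℝ) := by exact_mod_cast hn
  have hn0 : (0:ℝ) < (n:ℝ) := by linarith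
  have hIcc : z ∈ Icc ((n : ℝ) + 1)⁻¹ (n : ℝ)⁻¹ := ⟨hmem.1.le, hmem.2⟩
  have hsm := g_strictMonoOn p hp (n:ℝ) hn1
  rw [f_eq_g p hp n hn z hIcc]
  constructor
  · rw [← g_val_left p hp (n:ℝ) hn0]
    exact hsm ⟨le_refl _, ab_le n hn⟩ hIcc hmem.1
  · rw [← g_val_right p hp (n:ℝ) hn0]
    rcases eq_or_lt_of_le hmem.2 with h | h
    · rw [h]
    · exact (hsm hIcc ⟨ab_le n hn, le_refl _⟩ h).le

lemma f_mapsTo (p : ℝ) (hp : 1 < p) : MapsTo (f p) (Ioc (0:ℝ) 1) (Ioc (0:ℝ) 1) := by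
  intro z hz
  obtain ⟨hlo, hhi⟩ := f_bounds p hp z hz
  obtain ⟨hn, _⟩ := mem_piece z hz
  have hn0 : (0:ℝ) < (⌊z⁻¹⌋:ℝ) := by exact_mod_cast hn
  constructor
  · exact lt_trans (Real.rpow_pos_of_pos (by linarith) _) hlo
  · calc f p z ≤ (⌊z⁻¹⌋ : ℝ) ^ (1 - p) := hhi
      _ ≤ 1 := Real.rpow_le_one_of_one_le_of_nonpos (by exact_mod_cast hn) (by linarith)

lemma f_strictMonoOn (p : ℝ) (hp : 1 < p) : StrictMonoOn (f p) (Ioc (0:ℝ) 1) := by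
  intro z1 hz1 z2 hz2 hlt
  obtain ⟨hn1, hm1⟩ := mem_piece z1 hz1
  obtain ⟨hn2, hm2⟩ := mem_piece z2 hz2
  set n1 := ⌊z1⁻¹⌋
  set n2 := ⌊z2⁻¹⌋
  have hIcc1 : z1 ∈ Icc ((n1 : ℝ) + 1)⁻¹ (n1 : ℝ)⁻¹ := ⟨hm1.1.le, hm1.2⟩
  have hIcc2 : z2 ∈ Icc ((n2 : ℝ) + 1)⁻¹ (n2 : ℝ)⁻¹ := ⟨hm2.1.le, hm2.2⟩
  have hle : n2 ≤ n1 := by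
    apply Int.floor_le_floor
    exact inv_anti₀ hz1.1 hlt.le
  rw [f_eq_g p hp n1 hn1 z1 hIcc1, f_eq_g p hp n2 hn2 z2 hIcc2]
  rcases eq_or_lt_of_le hle with heq | hlt2
  · rw [heq] at hIcc2 ⊢
    exact g_strictMonoOn p hp (n1:ℝ) (by exact_mod_cast hn1) hIcc1 hIcc2 hlt
  · have hn10 : (0:ℝ) < (n1:ℝ) := by exact_mod_cast hn1
    have hn20 : (0:ℝ) < (n2:ℝ) := by exact_mod_cast hn2
    have h1 : g p (n1:ℝ) z1 ≤ (n1:ℝ) ^ (1 - p) := by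
      rw [← g_val_right p hp _ hn10]
      rcases eq_or_lt_of_le hm1.2 with h | h
      · rw [h]
      · exact (g_strictMonoOn p hp (n1:ℝ) (by exact_mod_cast hn1) hIcc1
          ⟨ab_le n1 hn1, le_refl _⟩ h).le
    have h2 : ((n2:ℝ) + 1) ^ (1 - p) < g p (n2:ℝ) z2 := by
      rw [← g_val_left p hp _ hn20]
      exact g_strictMonoOn p hp (n2:ℝ) (by exact_mod_cast hn2)
        ⟨le_refl _, ab_le n2 hn2⟩ hIcc2 hm2.1
    have h3 : (n1:ℝ) ^ (1 - p) ≤ ((n2:ℝ) + 1) ^ (1 - p) := by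
      apply Real.rpow_le_rpow_of_nonpos (by linarith)
      · exact_mod_cast hlt2
      · linarith
    linarith

lemma exists_index (p : ℝ) (hp : 1 < p) (y : ℝ) (hy : y ∈ Ioc (0:ℝ) 1) :
    ∃ n : ℤ, 1 ≤ n ∧ ((n:ℝ) + 1) ^ (1 - p) < y ∧ y ≤ (n:ℝ) ^ (1 - p) := by
  have hy0 : 0 < y := hy.1
  set t : ℝ := y ^ (1 - p)⁻¹ with ht
  have h1p : 1 - p < 0 := by linarith
  have hinv : (1 - p)⁻¹ < 0 := inv_lt_zero.2 h1p
  have ht1 : 1 ≤ t := by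
    have := Real.rpow_le_rpow_of_nonpos hy0 hy.2 hinv.le
    simpa using this
  have ht0 : 0 < t := by linarith
  have htpow : t ^ (1 - p) = y := by
    rw [ht, ← Real.rpow_mul hy0.le, inv_mul_cancel₀ h1p.ne, Real.rpow_one]
  refine ⟨⌊t⌋, Int.le_floor.2 (by exact_mod_cast ht1), ?_, ?_⟩
  · have h := Int.lt_floor_add_one t
    calc ((⌊t⌋:ℝ) + 1) ^ (1 - p) < t ^ (1 - p) :=
          Real.rpow_lt_rpow_of_neg ht0 (by exact_mod_cast h) h1p
      _ = y := htpow
  · have h := Int.floor_le t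
    have hfl0 : (0:ℝ) < (⌊t⌋:ℝ) := by
      exact_mod_cast Int.lt_of_lt_of_le zero_lt_one (Int.le_floor.2 (by exact_mod_cast ht1))
    calc y = t ^ (1 - p) := htpow.symm
      _ ≤ ((⌊t⌋:ℝ)) ^ (1 - p) := Real.rpow_le_rpow_of_nonpos hfl0 h h1p.le

lemma f_surjOn (p : ℝ) (hp : 1 < p) : SurjOn (f p) (Ioc (0:ℝ) 1) (Ioc (0:ℝ) 1) := by
  intro y hy
  obtain ⟨n, hn, hlo, hhi⟩ := exists_index p hp y hy
  have hn0 : (0:ℝ) < (n:ℝ) := by exact_mod_cast hn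
  have hab := ab_le n hn
  have hcont : ContinuousOn (g p (n:ℝ)) (Icc ((n:ℝ) + 1)⁻¹ (n:ℝ)⁻¹) :=
    (g_continuous p hp.le (n:ℝ)).continuousOn
  have hivt := intermediate_value_Icc hab hcont
  have hyIcc : y ∈ Icc (g p (n:ℝ) ((n:ℝ)+1)⁻¹) (g p (n:ℝ) (n:ℝ)⁻¹) := by
    rw [g_val_left p hp _ hn0, g_val_right p hp _ hn0]
    exact ⟨hlo.le, hhi⟩
  obtain ⟨z, hzIcc, hzval⟩ := hivt hyIcc
  refine ⟨z, piece_subset n hn hzIcc, ?_⟩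
  rw [f_eq_g p hp n hn z hzIcc, hzval]

lemma f_one (p : ℝ) (hp : 1 < p) : f p 1 = 1 := by
  unfold f
  norm_num
  rw [Real.zero_rpow (by linarith)]

lemma f_continuousOn (p : ℝ) (hp : 1 < p) : ContinuousOn (f p) (Ioc (0:ℝ) 1) := by
  intro z hz
  have hfz := f_mapsTo p hp hz
  have hfz0 : 0 < f p z := hfz.1
  have hfz1 : f p z ≤ 1 := hfz.2
  have hsl : Ioc (0:ℝ) 1 ∈ 𝓝[≤] z :=
    mem_of_superset (Ioc_mem_nhdsLE hz.1) (Ioc_subset_Ioc le_rfl hz.2)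
  have hleft : ContinuousWithinAt (f p) (Iic z) z := by
    apply (f_strictMonoOn p hp).continuousWithinAt_left_of_exists_between hsl
    intro b hb
    set y := max b (f p z / 2) with hy
    have hyfz : y < f p z := max_lt hb (by linarith)
    have hymem : y ∈ Ioc (0:ℝ) 1 :=
      ⟨lt_of_lt_of_le (by linarith) (le_max_right _ _), by linarith⟩
    obtain ⟨c, hc, hcy⟩ := f_surjOn p hp hymem
    exact ⟨c, hc, by rw [hcy]; exact le_max_left _ _, by rw [hcy]; exact hyfz⟩
  rcases eq_or_lt_of_le hz.2 with h1 | h1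
  · subst h1
    exact hleft.mono (fun x hx => hx.2)
  · have hfz1' : f p z < 1 := by
      rw [← f_one p hp]
      exact f_strictMonoOn p hp hz (by norm_num) h1
    have hsr : Ioc (0:ℝ) 1 ∈ 𝓝[≥] z :=
      mem_of_superset (Ico_mem_nhdsGE h1)
        (fun x hx => ⟨lt_of_lt_of_le hz.1 hx.1, hx.2.le⟩)
    have hright : ContinuousWithinAt (f p) (Ici z) z := by
      apply (f_strictMonoOn p hp).continuousWithinAt_right_of_exists_between hsr
      intro b hb
      set y := min b ((f p z + 1) / 2) with hy
      have hyfz : f p z < y := lt_min hb (by linarith)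
      have hymem : y ∈ Ioc (0:ℝ) 1 :=
        ⟨by linarith, le_trans (min_le_right _ _) (by linarith)⟩
      obtain ⟨c, hc, hcy⟩ := f_surjOn p hp hymem
      exact ⟨c, hc, by rw [hcy]; exact hyfz, by rw [hcy]; exact min_le_left _ _⟩
    exact (hleft.union hright).mono
      (fun x _ => (le_total x z).elim Or.inl Or.inr)

end FloorRpowAux

/-- For real `p > 1`, the function `z ↦ ⌊z⁻¹⌋·z^p + (1 − ⌊z⁻¹⌋·z)^p` is a
continuous bijection from `(0,1]` onto `(0,1]`. -/
theorem floor_rpow_continuous_bijOn (p : ℝ) (hp : 1 < p) :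
    ContinuousOn (fun z : ℝ => (⌊z⁻¹⌋ : ℝ) * z ^ p + (1 - (⌊z⁻¹⌋ : ℝ) * z) ^ p)
      (Set.Ioc 0 1) ∧
    Set.BijOn (fun z : ℝ => (⌊z⁻¹⌋ : ℝ) * z ^ p + (1 - (⌊z⁻¹⌋ : ℝ) * z) ^ p)
      (Set.Ioc 0 1) (Set.Ioc 0 1) := by
  refine ⟨FloorRpowAux.f_continuousOn p hp,
    FloorRpowAux.f_mapsTo p hp,
    (FloorRpowAux.f_strictMonoOn p hp).injOn,
    FloorRpowAux.f_surjOn p hp⟩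
end

section
/- Let p > 1 be real, C ∈ (0,1), and suppose a nonnegative sequence (wᵢ)_{i≥1} satisfies Σwᵢ = 1, Σwᵢ^p = C, and there is m ≥ 1 with w₁ = w₂ = ... = w_m > w_{m+1} ≥ 0 and wᵢ = 0 for all i ≥ m+2. Then m = ⌊w₁⁻¹⌋, w_{m+1} = 1 − m·w₁, and w₁ is the unique z ∈ (0,1) with ⌊z⁻¹⌋·z^p + (1−⌊z⁻¹⌋z)^p = C; in particular such a vector is uniquely determined by p and C. -/
open Real Set

/-- value lemma -/
lemma aux_val (p c : ℝ) (hc : 0 < c) : c * (c⁻¹) ^ p = c ^ (1 - p) := by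
  have h : c ^ (1 - p) = c ^ (1 + -p) := by ring_nf
  rw [h, Real.rpow_add hc, Real.rpow_one, Real.rpow_neg hc.le, ← Real.inv_rpow hc.le]

lemma aux_g_mono (p : ℝ) (hp : 1 < p) (n : ℕ) (hn : 1 ≤ n) :
    StrictMonoOn (fun z : ℝ => (n : ℝ) * z ^ p + (1 - n * z) ^ p)
      (Set.Icc (((n : ℝ) + 1)⁻¹) ((n : ℝ)⁻¹)) := by
  have hn0 : (0:ℝ) < n := by exact_mod_cast hn
  apply strictMonoOn_of_deriv_pos (convex_Icc _ _)
  · intro x hx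
    have hx0 : 0 < x := lt_of_lt_of_le (by positivity) hx.1
    have c1 : ContinuousAt (fun z : ℝ => (n : ℝ) * z ^ p) x :=
      (Real.continuousAt_rpow_const x p (Or.inl hx0.ne')).const_mul _
    have c2 : ContinuousAt (fun z : ℝ => (1 - (n:ℝ) * z) ^ p) x :=
      ContinuousAt.comp (Real.continuousAt_rpow_const _ p (Or.inr (by linarith)))
        ((continuous_const.sub (continuous_const.mul continuous_id)).continuousAt)
    exact (c1.add c2).continuousWithinAt
  · intro z hz
    rw [interior_Icc] at hz
    have hz0 : 0 < z := lt_trans (by positivity) hz.1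
    have h1 : (n:ℝ) * z < 1 := by
      have := (mul_lt_mul_iff_right₀ hn0).mpr hz.2
      rwa [mul_inv_cancel₀ hn0.ne'] at this
    have h2 : 1 - (n:ℝ) * z < z := by
      have := (mul_lt_mul_iff_left₀ (by positivity : (0:ℝ) < (n:ℝ)+1)).mpr hz.1
      rw [inv_mul_cancel₀ (by positivity : ((n:ℝ)+1) ≠ 0)] at this
      nlinarith
    have h1nz : 0 < 1 - (n:ℝ) * z := by linarith
    have d1 : HasDerivAt (fun z : ℝ => z ^ p) (p * z ^ (p - 1)) z :=
      Real.hasDerivAt_rpow_const (Or.inl hz0.ne')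
    have d2 : HasDerivAt (fun z : ℝ => 1 - (n:ℝ) * z) (-(n:ℝ)) z := by
      simpa using ((hasDerivAt_id z).const_mul (n:ℝ)).const_sub 1
    have d3 : HasDerivAt (fun z : ℝ => (1 - (n:ℝ) * z) ^ p)
        (p * (1 - (n:ℝ) * z) ^ (p - 1) * -(n:ℝ)) z :=
      HasDerivAt.comp (h₂ := fun y : ℝ => y ^ p) z (Real.hasDerivAt_rpow_const (p := p) (Or.inl h1nz.ne')) d2
    have D : HasDerivAt (fun z : ℝ => (n : ℝ) * z ^ p + (1 - n * z) ^ p)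
        ((n:ℝ) * (p * z ^ (p - 1)) + p * (1 - (n:ℝ) * z) ^ (p - 1) * -(n:ℝ)) z :=
      (d1.const_mul (n:ℝ)).add d3
    rw [D.deriv]
    have hcmp : (1 - (n:ℝ) * z) ^ (p - 1) < z ^ (p - 1) :=
      Real.rpow_lt_rpow h1nz.le h2 (by linarith)
    nlinarith [mul_pos (mul_pos hn0 (show (0:ℝ) < p by linarith)) (sub_pos.mpr hcmp)]

lemma aux_g_right (p : ℝ) (hp : 1 < p) (n : ℕ) (hn : 1 ≤ n) :
    (n : ℝ) * ((n:ℝ)⁻¹) ^ p + (1 - (n:ℝ) * ((n:ℝ)⁻¹)) ^ p = (n:ℝ) ^ (1 - p) := by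
  have hn0 : (0:ℝ) < n := by exact_mod_cast hn
  rw [mul_inv_cancel₀ hn0.ne', sub_self, Real.zero_rpow (by linarith), add_zero,
    aux_val p _ hn0]

lemma aux_g_left (p : ℝ) (hp : 1 < p) (n : ℕ) :
    (n : ℝ) * (((n:ℝ)+1)⁻¹) ^ p + (1 - (n:ℝ) * (((n:ℝ)+1)⁻¹)) ^ p = ((n:ℝ)+1) ^ (1 - p) := by
  have h0 : (0:ℝ) < (n:ℝ) + 1 := by positivity
  have h1 : 1 - (n:ℝ) * (((n:ℝ)+1)⁻¹) = ((n:ℝ)+1)⁻¹ := by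
    field_simp
    ring
  rw [h1, ← aux_val p _ h0]
  ring

lemma aux_F_mono (p : ℝ) (hp : 1 < p) {x y : ℝ} (hx : x ∈ Set.Ioo (0:ℝ) 1)
    (hy : y ∈ Set.Ioo (0:ℝ) 1) (hxy : x < y) :
    (⌊x⁻¹⌋ : ℝ) * x ^ p + (1 - (⌊x⁻¹⌋ : ℝ) * x) ^ p
      < (⌊y⁻¹⌋ : ℝ) * y ^ p + (1 - (⌊y⁻¹⌋ : ℝ) * y) ^ p := by
  obtain ⟨hx0, hx1⟩ := hx
  obtain ⟨hy0, hy1⟩ := hy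
  -- floors are ≥ 1
  have hxinv : 1 < x⁻¹ := one_lt_inv_iff₀.mpr ⟨hx0, hx1⟩
  have hyinv : 1 < y⁻¹ := one_lt_inv_iff₀.mpr ⟨hy0, hy1⟩
  set k : ℕ := (⌊x⁻¹⌋).toNat with hkdef
  set l : ℕ := (⌊y⁻¹⌋).toNat with hldef
  have hkfl : (⌊x⁻¹⌋ : ℤ) = (k : ℤ) := (Int.toNat_of_nonneg (by positivity)).symm
  have hlfl : (⌊y⁻¹⌋ : ℤ) = (l : ℤ) := (Int.toNat_of_nonneg (by positivity)).symm
  have hk1 : 1 ≤ k := by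
    have h : (1:ℤ) ≤ ⌊x⁻¹⌋ := Int.le_floor.mpr (by exact_mod_cast hxinv.le)
    omega
  have hl1 : 1 ≤ l := by
    have h : (1:ℤ) ≤ ⌊y⁻¹⌋ := Int.le_floor.mpr (by exact_mod_cast hyinv.le)
    omega
  have hk0 : (0:ℝ) < k := by exact_mod_cast hk1
  have hl0 : (0:ℝ) < l := by exact_mod_cast hl1
  have hkR : ((⌊x⁻¹⌋ : ℤ) : ℝ) = (k : ℝ) := by exact_mod_cast hkfl
  have hlR : ((⌊y⁻¹⌋ : ℤ) : ℝ) = (l : ℝ) := by exact_mod_cast hlfl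
  -- interval facts for x
  have hklex : (k:ℝ) ≤ x⁻¹ := by
    have h := Int.floor_le (x⁻¹); rw [hkfl] at h; exact_mod_cast h
  have hxltk1 : x⁻¹ < (k:ℝ) + 1 := by
    have h := Int.lt_floor_add_one (x⁻¹); rw [hkfl] at h; exact_mod_cast h
  have hA : (k:ℝ) * x ≤ 1 := by
    have := mul_le_mul_of_nonneg_right hklex hx0.le
    rwa [inv_mul_cancel₀ hx0.ne'] at this
  have hB : 1 < ((k:ℝ) + 1) * x := by
    have := mul_lt_mul_of_pos_right hxltk1 hx0
    rwa [inv_mul_cancel₀ hx0.ne'] at this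
  have hxmem : x ∈ Set.Icc (((k:ℝ)+1)⁻¹) ((k:ℝ)⁻¹) := by
    constructor
    · rw [← one_div]
      exact le_of_lt ((div_lt_iff₀ (by positivity)).mpr (by nlinarith))
    · rw [← one_div]
      exact (le_div_iff₀ hk0).mpr (by nlinarith)
  -- interval facts for y
  have hlley : (l:ℝ) ≤ y⁻¹ := by
    have h := Int.floor_le (y⁻¹); rw [hlfl] at h; exact_mod_cast h
  have hyltl1 : y⁻¹ < (l:ℝ) + 1 := by
    have h := Int.lt_floor_add_one (y⁻¹); rw [hlfl] at h; exact_mod_cast h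
  have hC : (l:ℝ) * y ≤ 1 := by
    have := mul_le_mul_of_nonneg_right hlley hy0.le
    rwa [inv_mul_cancel₀ hy0.ne'] at this
  have hD : 1 < ((l:ℝ) + 1) * y := by
    have := mul_lt_mul_of_pos_right hyltl1 hy0
    rwa [inv_mul_cancel₀ hy0.ne'] at this
  have hyleft : (((l:ℝ)+1))⁻¹ < y := by
    rw [← one_div]
    exact (div_lt_iff₀ (by positivity)).mpr (by nlinarith)
  have hymem : y ∈ Set.Icc (((l:ℝ)+1)⁻¹) ((l:ℝ)⁻¹) := by
    refine ⟨hyleft.le, ?_⟩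
    rw [← one_div]
    exact (le_div_iff₀ hl0).mpr (by nlinarith)
  -- l ≤ k
  have hlk : l ≤ k := by
    have h : ⌊y⁻¹⌋ ≤ ⌊x⁻¹⌋ := Int.floor_le_floor (by
      exact inv_anti₀ hx0 hxy.le)
    rw [hkfl, hlfl] at h; exact_mod_cast h
  rw [hkR, hlR]
  clear_value k l
  rcases eq_or_lt_of_le hlk with heq | hlt
  · subst heq
    exact aux_g_mono p hp l hl1 hxmem hymem hxy
  · -- l < k
    have hstep1 : (l:ℝ) * ((l:ℝ)⁻¹) ^ p ≤ 0 ∨ True := Or.inr trivial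
    have hleft_mem : (((k:ℝ)+1))⁻¹ ≤ (k:ℝ)⁻¹ := by
      apply inv_anti₀ hk0; linarith
    have h1 : (k:ℝ) * x ^ p + (1 - (k:ℝ) * x) ^ p
        ≤ (k:ℝ) * ((k:ℝ)⁻¹) ^ p + (1 - (k:ℝ) * ((k:ℝ)⁻¹)) ^ p :=
      (aux_g_mono p hp k hk1).monotoneOn hxmem ⟨hleft_mem, le_refl _⟩ hxmem.2
    have h2 := aux_g_right p hp k hk1
    have h3 : (k:ℝ) ^ (1-p) ≤ ((l:ℝ)+1) ^ (1-p) := by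
      apply Real.rpow_le_rpow_of_nonpos (by positivity) _ (by linarith)
      have : (l+1 : ℕ) ≤ k := hlt
      exact_mod_cast this
    have h4 := aux_g_left p hp l
    have hlmem : (((l:ℝ)+1))⁻¹ ∈ Set.Icc (((l:ℝ)+1)⁻¹) ((l:ℝ)⁻¹) := by
      refine ⟨le_refl _, ?_⟩
      apply inv_anti₀ hl0; linarith
    have h5 : (l:ℝ) * ((((l:ℝ)+1))⁻¹) ^ p + (1 - (l:ℝ) * ((((l:ℝ)+1))⁻¹)) ^ p
        < (l:ℝ) * y ^ p + (1 - (l:ℝ) * y) ^ p :=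
      aux_g_mono p hp l hl1 hlmem hymem hyleft
    calc (k:ℝ) * x ^ p + (1 - (k:ℝ) * x) ^ p
        ≤ (k:ℝ) ^ (1-p) := h2 ▸ h1
      _ ≤ ((l:ℝ)+1) ^ (1-p) := h3
      _ = (l:ℝ) * ((((l:ℝ)+1))⁻¹) ^ p + (1 - (l:ℝ) * ((((l:ℝ)+1))⁻¹)) ^ p := h4.symm
      _ < (l:ℝ) * y ^ p + (1 - (l:ℝ) * y) ^ p := h5

/-- Uniqueness of the two-valued optimal probability vector: if `(wᵢ)` (indexed so
that `w 0` is the first entry) is nonnegative, sums to `1`, has `p`-th power sum `C`,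
with `w 0 = ⋯ = w (m-1) > w m ≥ 0` and `w i = 0` for `i ≥ m+1`, then
`m = ⌊(w 0)⁻¹⌋`, `w m = 1 − m·(w 0)`, and `w 0` is the unique `z ∈ (0,1)` solving
`⌊z⁻¹⌋·z^p + (1−⌊z⁻¹⌋·z)^p = C`. -/
theorem two_valued_vector_unique (p C : ℝ) (hp : 1 < p) (hC : C ∈ Set.Ioo (0:ℝ) 1)
    (w : ℕ → ℝ) (hw : ∀ i, 0 ≤ w i)
    (hsum : ∑' i, w i = 1) (hsump : ∑' i, w i ^ p = C)
    (m : ℕ) (hm : 1 ≤ m)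
    (hconst : ∀ i < m, w i = w 0) (hlt : w m < w 0)
    (hzero : ∀ i, m + 1 ≤ i → w i = 0) :
    (m : ℤ) = ⌊(w 0)⁻¹⌋ ∧
    w m = 1 - (m : ℝ) * w 0 ∧
    w 0 ∈ Set.Ioo (0:ℝ) 1 ∧
    (⌊(w 0)⁻¹⌋ : ℝ) * (w 0) ^ p + (1 - (⌊(w 0)⁻¹⌋ : ℝ) * w 0) ^ p = C ∧
    ∀ z ∈ Set.Ioo (0:ℝ) 1,
      (⌊z⁻¹⌋ : ℝ) * z ^ p + (1 - (⌊z⁻¹⌋ : ℝ) * z) ^ p = C → z = w 0 := by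
  have hmR : (1:ℝ) ≤ m := by exact_mod_cast hm
  have hsupp : ∀ i ∉ Finset.range (m+1), w i = 0 := by
    intro i hi
    apply hzero
    simp only [Finset.mem_range, not_lt] at hi
    exact hi
  have hsum' : ∑ i ∈ Finset.range (m+1), w i = 1 := by
    rw [← tsum_eq_sum (L := SummationFilter.unconditional ℕ) hsupp]; exact hsum
  have hconstsum : ∑ i ∈ Finset.range m, w i = (m:ℝ) * w 0 := by
    rw [Finset.sum_congr rfl (fun i hi => hconst i (Finset.mem_range.mp hi)),
      Finset.sum_const, Finset.card_range, nsmul_eq_mul]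
  have hkey : (m:ℝ) * w 0 + w m = 1 := by
    rw [Finset.sum_range_succ, hconstsum] at hsum'; exact hsum'
  have hsuppp : ∀ i ∉ Finset.range (m+1), w i ^ p = 0 := by
    intro i hi
    rw [hsupp i hi, Real.zero_rpow (by linarith)]
  have hsump' : ∑ i ∈ Finset.range (m+1), w i ^ p = C := by
    rw [← tsum_eq_sum (L := SummationFilter.unconditional ℕ) hsuppp]; exact hsump
  have hconstsump : ∑ i ∈ Finset.range m, w i ^ p = (m:ℝ) * (w 0) ^ p := by
    rw [Finset.sum_congr rfl (fun i hi => by rw [hconst i (Finset.mem_range.mp hi)]),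
      Finset.sum_const, Finset.card_range, nsmul_eq_mul]
  have hkeyp : (m:ℝ) * (w 0) ^ p + (w m) ^ p = C := by
    rw [Finset.sum_range_succ, hconstsump] at hsump'; exact hsump'
  have hwm0 : 0 ≤ w m := hw m
  have hw0pos : 0 < w 0 := by nlinarith
  have hw0lt1 : w 0 < 1 := by
    rcases lt_or_ge (w 0) 1 with h | h
    · exact h
    · exfalso
      have hwm : w m = 0 := by nlinarith
      have hm1 : (m:ℝ) = 1 := by nlinarith
      have hw01 : w 0 = 1 := by nlinarith
      rw [hwm, hw01, hm1, Real.one_rpow, Real.zero_rpow (by linarith)] at hkeyp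
      simp at hkeyp
      linarith [hC.2]
  have hwmeq : w m = 1 - (m:ℝ) * w 0 := by linarith
  have hfl : ⌊(w 0)⁻¹⌋ = (m:ℤ) := by
    rw [Int.floor_eq_iff]
    constructor
    · push_cast
      rw [← one_div]
      refine (le_div_iff₀ hw0pos).mpr ?_
      linarith
    · push_cast
      rw [← one_div]
      refine (div_lt_iff₀ hw0pos).mpr ?_
      nlinarith
  have hflR : ((⌊(w 0)⁻¹⌋ : ℤ) : ℝ) = (m:ℝ) := by exact_mod_cast hfl
  have hIoo : w 0 ∈ Set.Ioo (0:ℝ) 1 := ⟨hw0pos, hw0lt1⟩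
  have heqC : (⌊(w 0)⁻¹⌋ : ℝ) * (w 0) ^ p + (1 - (⌊(w 0)⁻¹⌋ : ℝ) * w 0) ^ p = C := by
    rw [hflR, ← hwmeq]; exact hkeyp
  refine ⟨hfl.symm, hwmeq, hIoo, heqC, ?_⟩
  intro z hz hzeq
  rcases lt_trichotomy z (w 0) with h | h | h
  · exfalso
    have := aux_F_mono p hp hz hIoo h
    rw [hzeq, heqC] at this
    exact lt_irrefl _ this
  · exact h
  · exfalso
    have := aux_F_mono p hp hIoo hz h
    rw [hzeq, heqC] at this
    exact lt_irrefl _ this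
end

section
/- Let q > p > 1 be reals and suppose 0 < b < a < 1 satisfy 2·((a+2b)/2)^p ≥ a^p + 2b^p. Then there exist reals c, d with 0 ≤ c < b < d < a, c + 2d = a + 2b, c^p + 2d^p = a^p + 2b^p, and c^q + 2d^q < a^q + 2b^q. -/
open Real Set

lemma convex_sign {ψ : ℝ → ℝ} (hψ : StrictConvexOn ℝ (Ici 0) ψ)
    {B D : ℝ} (hB : 0 ≤ B) (hBD : B < D) (hψB : ψ B = 0) (hψD : ψ D = 0) :
    (∀ u, B < u → u < D → ψ u < 0) ∧ (∀ u, 0 ≤ u → u < B → 0 < ψ u) ∧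
      (∀ u, D < u → 0 < ψ u) := by
  have hD : (0:ℝ) ≤ D := hB.trans hBD.le
  refine ⟨fun u h1 h2 => ?_, fun u h0 h1 => ?_, fun u h1 => ?_⟩
  · have hne0 : D - B ≠ 0 := by linarith
    have ht : u = ((D - u)/(D - B)) • B + ((u - B)/(D - B)) • D := by
      rw [smul_eq_mul, smul_eq_mul]; field_simp; ring
    have := hψ.2 (mem_Ici.2 hB) (mem_Ici.2 hD) hBD.ne
      (show (0:ℝ) < (D - u)/(D - B) from div_pos (by linarith) (by linarith))
      (show (0:ℝ) < (u - B)/(D - B) from div_pos (by linarith) (by linarith))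
      (by rw [← add_div, show D - u + (u - B) = D - B by ring, div_self hne0])
    rw [← ht, hψB, hψD] at this
    simpa using this
  · have hud : u < D := lt_trans h1 hBD
    have hne0 : D - u ≠ 0 := by linarith
    have ht : B = ((D - B)/(D - u)) • u + ((B - u)/(D - u)) • D := by
      rw [smul_eq_mul, smul_eq_mul]; field_simp; ring
    have := hψ.2 (mem_Ici.2 h0) (mem_Ici.2 hD) hud.ne
      (show (0:ℝ) < (D - B)/(D - u) from div_pos (by linarith) (by linarith))
      (show (0:ℝ) < (B - u)/(D - u) from div_pos (by linarith) (by linarith))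
      (by rw [← add_div, show D - B + (B - u) = D - u by ring, div_self hne0])
    rw [← ht, hψB, hψD] at this
    have hpos : (0:ℝ) < (D - B)/(D - u) := div_pos (by linarith) (by linarith)
    rw [smul_eq_mul, smul_eq_mul] at this
    nlinarith [this]
  · have hBu : B < u := hBD.trans h1
    have hne0 : u - B ≠ 0 := by linarith
    have ht : D = ((u - D)/(u - B)) • B + ((D - B)/(u - B)) • u := by
      rw [smul_eq_mul, smul_eq_mul]; field_simp; ring
    have := hψ.2 (mem_Ici.2 hB) (mem_Ici.2 (hD.trans h1.le)) hBu.ne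
      (show (0:ℝ) < (u - D)/(u - B) from div_pos (by linarith) (by linarith))
      (show (0:ℝ) < (D - B)/(u - B) from div_pos (by linarith) (by linarith))
      (by rw [← add_div, show u - D + (D - B) = u - B by ring, div_self hne0])
    rw [← ht, hψB, hψD] at this
    have hpos : (0:ℝ) < (D - B)/(u - B) := div_pos (by linarith) (by linarith)
    rw [smul_eq_mul, smul_eq_mul] at this
    nlinarith [this]

lemma key_drop (p q a b c d : ℝ) (hp : 1 < p) (hpq : p < q)
    (hc : 0 ≤ c) (hcb : c < b) (hbd : b < d) (hda : d < a)
    (h1 : c + 2 * d = a + 2 * b) (h2 : c ^ p + 2 * d ^ p = a ^ p + 2 * b ^ p) :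
    c ^ q + 2 * d ^ q < a ^ q + 2 * b ^ q := by
  have hb : 0 < b := hc.trans_lt hcb
  have hd : 0 < d := hb.trans hbd
  have ha : 0 < a := hd.trans hda
  have hp0 : (0:ℝ) < p := by linarith
  have hq0 : (0:ℝ) < q := by linarith
  have hp1 : (0:ℝ) < p - 1 := by linarith
  have hq1 : (0:ℝ) < q - 1 := by linarith
  set B := b ^ (p-1) with hBdef
  set D := d ^ (p-1) with hDdef
  have hBD : B < D := Real.rpow_lt_rpow hb.le hbd hp1
  have hB0 : (0:ℝ) ≤ B := Real.rpow_nonneg hb.le _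
  set β : ℝ := (d ^ (q-1) - b ^ (q-1)) / (D - B) with hβ
  set α : ℝ := b ^ (q-1) - β * B with hα
  set s : ℝ := (q-1)/(p-1) with hs
  have hs1 : 1 < s := by rw [hs, lt_div_iff₀ hp1]; linarith
  set ψ : ℝ → ℝ := fun u => u ^ s - (β * u + α) with hψdef
  have hψ : StrictConvexOn ℝ (Ici 0) ψ := by
    have hcv := strictConvexOn_rpow hs1
    have haf : ConvexOn ℝ (Ici 0) (fun u : ℝ => -(β * u + α)) :=
      ⟨convex_Ici 0, fun x _ y _ t1 t2 _ _ htab => le_of_eq (by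
        simp only [smul_eq_mul]; linear_combination α * htab)⟩
    have heq : ψ = (fun u : ℝ => u ^ s) + (fun u : ℝ => -(β * u + α)) := by
      funext u; simp [hψdef, sub_eq_add_neg]
    rw [heq]; exact hcv.add_convexOn haf
  -- rewriting ψ at powers
  have hpow : ∀ t : ℝ, 0 ≤ t → (t ^ (p-1)) ^ s = t ^ (q-1) := by
    intro t ht
    rw [← Real.rpow_mul ht]
    congr 1
    rw [hs, mul_comm, div_mul_cancel₀ _ (ne_of_gt hp1)]
  have hψt : ∀ t : ℝ, 0 ≤ t → ψ (t ^ (p-1)) = t ^ (q-1) - (β * t ^ (p-1) + α) := by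
    intro t ht
    simp only [hψdef, hpow t ht]
  have hne : D - B ≠ 0 := by linarith
  have hBs : B ^ s = b ^ (q-1) := by rw [hBdef]; exact hpow b hb.le
  have hDs : D ^ s = d ^ (q-1) := by rw [hDdef]; exact hpow d hd.le
  have hψB : ψ B = 0 := by
    show B ^ s - (β * B + α) = 0
    rw [hBs, hα]; ring
  have hψD : ψ D = 0 := by
    show D ^ s - (β * D + α) = 0
    rw [hDs, hα, hβ]
    field_simp
    ring
  obtain ⟨neg_mid, pos_left, pos_right⟩ := convex_sign hψ hB0 hBD hψB hψD
  -- sign of h t := t^(q-1) - (β t^(p-1) + α)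
  have hsign_left : ∀ t : ℝ, 0 ≤ t → t < b → 0 < t ^ (q-1) - (β * t ^ (p-1) + α) := by
    intro t ht htb
    have := pos_left (t ^ (p-1)) (Real.rpow_nonneg ht _)
      (Real.rpow_lt_rpow ht htb hp1)
    rwa [hψt t ht] at this
  have hsign_mid : ∀ t : ℝ, b < t → t < d → t ^ (q-1) - (β * t ^ (p-1) + α) < 0 := by
    intro t htb htd
    have ht : (0:ℝ) ≤ t := le_of_lt (hb.trans htb)
    have := neg_mid (t ^ (p-1)) (Real.rpow_lt_rpow hb.le htb hp1)
      (Real.rpow_lt_rpow ht htd hp1)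
    rwa [hψt t ht] at this
  have hsign_right : ∀ t : ℝ, d < t → 0 < t ^ (q-1) - (β * t ^ (p-1) + α) := by
    intro t htd
    have ht : (0:ℝ) ≤ t := le_of_lt (hd.trans htd)
    have := pos_right (t ^ (p-1)) (Real.rpow_lt_rpow hd.le htd hp1)
    rwa [hψt t ht] at this
  -- the comparison function Φ
  set Φ : ℝ → ℝ := fun x => x ^ q - (q * β / p) * x ^ p - (q * α) * x with hΦdef
  have hΦ' : ∀ x : ℝ, HasDerivAt Φ (q * (x ^ (q-1) - (β * x ^ (p-1) + α))) x := by
    intro x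
    have hq' : HasDerivAt (fun x : ℝ => x ^ q) (q * x ^ (q-1)) x :=
      Real.hasDerivAt_rpow_const (Or.inr (by linarith))
    have hp' : HasDerivAt (fun x : ℝ => x ^ p) (p * x ^ (p-1)) x :=
      Real.hasDerivAt_rpow_const (Or.inr (by linarith))
    have := (hq'.sub ((hp'.const_mul (q * β / p)).add ((hasDerivAt_id x).const_mul (q * α))))
    convert this using 1
    · rfl
    · rfl
    · funext y; simp only [hΦdef, id, Pi.sub_apply, Pi.add_apply]; ring
    · field_simp
  have hΦcont : Continuous Φ := by
    rw [continuous_iff_continuousAt]; exact fun x => (hΦ' x).continuousAt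
  have hderiv : ∀ x : ℝ, deriv Φ x = q * (x ^ (q-1) - (β * x ^ (p-1) + α)) :=
    fun x => (hΦ' x).deriv
  -- Φ increases on [c,b], decreases on [b,d], increases on [d,a]
  have m1 : Φ c < Φ b := by
    have : StrictMonoOn Φ (Icc c b) := by
      apply strictMonoOn_of_deriv_pos (convex_Icc c b) hΦcont.continuousOn
      intro x hx
      rw [interior_Icc] at hx
      rw [hderiv]
      exact mul_pos hq0 (hsign_left x (hc.trans hx.1.le) hx.2)
    exact this (left_mem_Icc.2 (by linarith)) (right_mem_Icc.2 (by linarith)) hcb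
  have m2 : Φ d < Φ b := by
    have : StrictAntiOn Φ (Icc b d) := by
      apply strictAntiOn_of_deriv_neg (convex_Icc b d) hΦcont.continuousOn
      intro x hx
      rw [interior_Icc] at hx
      rw [hderiv]
      exact mul_neg_of_pos_of_neg hq0 (hsign_mid x hx.1 hx.2)
    exact this (left_mem_Icc.2 (by linarith)) (right_mem_Icc.2 (by linarith)) hbd
  have m3 : Φ d < Φ a := by
    have : StrictMonoOn Φ (Icc d a) := by
      apply strictMonoOn_of_deriv_pos (convex_Icc d a) hΦcont.continuousOn
      intro x hx
      rw [interior_Icc] at hx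
      rw [hderiv]
      exact mul_pos hq0 (hsign_right x hx.1)
    exact this (left_mem_Icc.2 (by linarith)) (right_mem_Icc.2 (by linarith)) hda
  have hfin : Φ c + 2 * Φ d < 2 * Φ b + Φ a := by linarith
  simp only [hΦdef] at hfin
  have e2 := congrArg (fun z : ℝ => (q * β / p) * z) h2
  have e1 := congrArg (fun z : ℝ => (q * α) * z) h1
  clear_value β α
  linarith [hfin, e1, e2]

/-- Case 1 replacement: if `0 < b < a < 1` and `2·((a+2b)/2)^p ≥ a^p + 2b^p`, then
there exist `c, d` with `0 ≤ c < b < d < a`, `c + 2d = a + 2b`,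
`c^p + 2d^p = a^p + 2b^p`, and `c^q + 2d^q < a^q + 2b^q`. -/
theorem replacement_case_one (p q a b : ℝ) (hp : 1 < p) (hpq : p < q)
    (hb : 0 < b) (hba : b < a) (ha : a < 1)
    (h : a ^ p + 2 * b ^ p ≤ 2 * ((a + 2 * b) / 2) ^ p) :
    ∃ c d : ℝ, 0 ≤ c ∧ c < b ∧ b < d ∧ d < a ∧
      c + 2 * d = a + 2 * b ∧
      c ^ p + 2 * d ^ p = a ^ p + 2 * b ^ p ∧
      c ^ q + 2 * d ^ q < a ^ q + 2 * b ^ q := by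
  have hp0 : (0:ℝ) < p := by linarith
  have ha0 : (0:ℝ) < a := hb.trans hba
  set g : ℝ → ℝ := fun t => (a + 2*b - 2*t) ^ p + 2 * t ^ p with hgdef
  have hcont : Continuous g := by
    have h1 : Continuous (fun x : ℝ => x ^ p) := Real.continuous_rpow_const hp0.le
    exact (h1.comp (by continuity)).add (continuous_const.mul h1)
  set T : ℝ := a ^ p + 2 * b ^ p with hTdef
  have hgL : g ((a+b)/2) < T := by
    have hconv := (strictConvexOn_rpow hp).2 (show b ∈ Ici (0:ℝ) from hb.le)
      (show a ∈ Ici (0:ℝ) from ha0.le) (ne_of_lt hba) one_half_pos one_half_pos (by norm_num)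
    simp only [smul_eq_mul] at hconv
    rw [show (1:ℝ)/2 * b + 1/2 * a = (a+b)/2 by ring] at hconv
    show (a + 2*b - 2*((a+b)/2)) ^ p + 2 * ((a+b)/2) ^ p < T
    rw [show a + 2*b - 2*((a+b)/2) = b by ring]
    rw [hTdef]; linarith
  rcases lt_or_ge (2*b) a with hc2 | hc2
  · -- 2b < a : right endpoint (a+2b)/2 < a
    have hge : T ≤ g ((a+2*b)/2) := by
      show T ≤ (a + 2*b - 2*((a+2*b)/2)) ^ p + 2 * ((a+2*b)/2) ^ p
      rw [show a + 2*b - 2*((a+2*b)/2) = 0 by ring, Real.zero_rpow (ne_of_gt hp0)]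
      rw [hTdef]; linarith [h]
    have hLr : (a+b)/2 ≤ (a+2*b)/2 := by linarith
    obtain ⟨d, hdm, hgd⟩ := intermediate_value_Ioc hLr hcont.continuousOn ⟨hgL, hge⟩
    have hd1 : (a+b)/2 < d := hdm.1
    have hd2 : d ≤ (a+2*b)/2 := hdm.2
    have hgd' : (a + 2*b - 2*d) ^ p + 2 * d ^ p = a ^ p + 2 * b ^ p := hgd
    have hc0 : (0:ℝ) ≤ a + 2*b - 2*d := by linarith
    have hcb : a + 2*b - 2*d < b := by linarith
    have hbd : b < d := by linarith
    have hda : d < a := by linarith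
    exact ⟨a + 2*b - 2*d, d, hc0, hcb, hbd, hda, by ring, hgd',
      key_drop p q a b _ d hp hpq hc0 hcb hbd hda (by ring) hgd'⟩
  · -- a ≤ 2b : right endpoint a
    have hga : T < g a := by
      have h2ba : (0:ℝ) ≤ 2*b - a := by linarith
      have hconv := (strictConvexOn_rpow hp).2 (show 2*b - a ∈ Ici (0:ℝ) from h2ba)
        (show a ∈ Ici (0:ℝ) from ha0.le) (show 2*b - a ≠ a by intro he; linarith [hba])
        one_half_pos one_half_pos (by norm_num)
      simp only [smul_eq_mul] at hconv
      rw [show (1:ℝ)/2 * (2*b - a) + 1/2 * a = b by ring] at hconv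
      show T < (a + 2*b - 2*a) ^ p + 2 * a ^ p
      rw [show a + 2*b - 2*a = 2*b - a by ring]
      rw [hTdef]; linarith
    have hLa : (a+b)/2 ≤ a := by linarith
    obtain ⟨d, hdm, hgd⟩ := intermediate_value_Ioc hLa hcont.continuousOn ⟨hgL, hga.le⟩
    have hd1 : (a+b)/2 < d := hdm.1
    have hd2 : d ≤ a := hdm.2
    have hgd' : (a + 2*b - 2*d) ^ p + 2 * d ^ p = a ^ p + 2 * b ^ p := hgd
    have hda : d < a := by
      rcases lt_or_eq_of_le hd2 with h' | h'
      · exact h'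
      · exfalso; rw [h'] at hgd; rw [hgd] at hga; exact lt_irrefl _ hga
    have hc0 : (0:ℝ) ≤ a + 2*b - 2*d := by linarith
    have hcb : a + 2*b - 2*d < b := by linarith
    have hbd : b < d := by linarith
    exact ⟨a + 2*b - 2*d, d, hc0, hcb, hbd, hda, by ring, hgd',
      key_drop p q a b _ d hp hpq hc0 hcb hbd hda (by ring) hgd'⟩
end

section
/- Let q > p > 1 be reals and suppose 0 < b < a < 1 satisfy 2·((a+2b)/2)^p < a^p + 2b^p. Then a > 2b, and there exist reals c, d with 0 < b < c < d < a, c + d = a + 2b, c^p + d^p = a^p + 2b^p, and c^q + d^q < a^q + 2b^q. -/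
open Real

/-- Tangent line inequality for `x^p`, `p ≥ 1`. -/
lemma rpow_tangent_aux {p x y : ℝ} (hp : 1 ≤ p) (hy : 0 < y) (hx : 0 ≤ x) :
    y ^ p + p * y ^ (p - 1) * (x - y) ≤ x ^ p := by
  have hs : -1 ≤ x / y - 1 := by
    have : 0 ≤ x / y := div_nonneg hx hy.le
    linarith
  have hB := one_add_mul_self_le_rpow_one_add hs hp
  have h1 : (1 + (x / y - 1)) = x / y := by ring
  rw [h1, Real.div_rpow hx hy.le] at hB
  have hyp : 0 < y ^ p := Real.rpow_pos_of_pos hy p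
  have h2 : (1 + p * (x / y - 1)) * y ^ p ≤ x ^ p := by
    calc (1 + p * (x / y - 1)) * y ^ p ≤ (x ^ p / y ^ p) * y ^ p :=
          mul_le_mul_of_nonneg_right hB hyp.le
      _ = x ^ p := by field_simp
  have h3 : y ^ (p - 1) = y ^ p / y := by
    rw [Real.rpow_sub hy, Real.rpow_one]
  calc y ^ p + p * y ^ (p - 1) * (x - y)
      = (1 + p * (x / y - 1)) * y ^ p := by
        rw [h3]; field_simp
    _ ≤ x ^ p := h2

lemma part_one {p a b : ℝ} (hp : 1 < p) (hb : 0 < b) (hba : b < a)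
    (h : 2 * ((a + 2 * b) / 2) ^ p < a ^ p + 2 * b ^ p) : 2 * b < a := by
  by_contra hle
  push_neg at hle  -- a ≤ 2 * b
  have ha0 : 0 < a := hb.trans hba
  set m : ℝ := (a + 2 * b) / 2 with hm
  have hm0 : 0 ≤ m := by positivity
  -- tangent at a, point m
  have h1 : a ^ p + p * a ^ (p - 1) * (m - a) ≤ m ^ p :=
    rpow_tangent_aux hp.le ha0 hm0
  -- tangent at b, point a
  have h2 : b ^ p + p * b ^ (p - 1) * (a - b) ≤ a ^ p :=
    rpow_tangent_aux hp.le hb ha0.le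
  -- monotonicity of x^(p-1)
  have h3 : b ^ (p - 1) ≤ a ^ (p - 1) :=
    Real.rpow_le_rpow hb.le hba.le (by linarith)
  have h2ba : 0 ≤ 2 * b - a := by linarith
  have h4 : p * b ^ (p - 1) * (2 * b - a) ≤ p * a ^ (p - 1) * (2 * b - a) := by
    have key : b ^ (p - 1) * (p * (2 * b - a)) ≤ a ^ (p - 1) * (p * (2 * b - a)) :=
      mul_le_mul_of_nonneg_right h3 (mul_nonneg (by linarith) h2ba)
    calc p * b ^ (p - 1) * (2 * b - a) = b ^ (p - 1) * (p * (2 * b - a)) := by ring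
      _ ≤ a ^ (p - 1) * (p * (2 * b - a)) := key
      _ = p * a ^ (p - 1) * (2 * b - a) := by ring
  have h5 : b ^ (p - 1) * b = b ^ p := by
    rw [← Real.rpow_add_one hb.ne' (p - 1)]
    norm_num
  have h5p : p * (b ^ (p - 1) * b) = p * b ^ p := by rw [h5]
  have hbp : 0 < b ^ p := Real.rpow_pos_of_pos hb p
  have h6 : b ^ p ≤ p * b ^ p := le_mul_of_one_le_left hbp.le hp.le
  have hma : m - a = (2 * b - a) / 2 := by rw [hm]; ring
  rw [hma] at h1
  nlinarith [h1, h2, h4, h5p, h6, h]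

set_option maxHeartbeats 1000000 in
lemma part_q {p q a b c d : ℝ} (hp : 1 < p) (hpq : p < q) (hb : 0 < b)
    (hbc : b < c) (hcd : c < d) (hda : d < a) (ha1 : a < 1)
    (hsum : c + d = a + 2 * b) (hpsum : c ^ p + d ^ p = a ^ p + 2 * b ^ p) :
    c ^ q + d ^ q < a ^ q + 2 * b ^ q := by
  have hc0 : 0 < c := hb.trans hbc
  have hd0 : 0 < d := hc0.trans hcd
  have ha0 : 0 < a := hd0.trans hda
  set α := Real.log a with hα
  set β := Real.log b with hβ
  set γ := Real.log c with hγ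
  set δ := Real.log d with hδ
  have hβγ : β < γ := Real.log_lt_log hb hbc
  have hγδ : γ < δ := Real.log_lt_log hc0 hcd
  have hδα : δ < α := Real.log_lt_log hd0 hda
  have hα0 : α < 0 := Real.log_neg ha0 ha1
  set F : ℝ → ℝ := fun t => Real.exp (t * α) + 2 * Real.exp (t * β)
      - Real.exp (t * γ) - Real.exp (t * δ) with hF
  have hFval : ∀ t, F t = a ^ t + 2 * b ^ t - c ^ t - d ^ t := by
    intro t
    simp only [hF, Real.rpow_def_of_pos ha0, Real.rpow_def_of_pos hb,
      Real.rpow_def_of_pos hc0, Real.rpow_def_of_pos hd0, mul_comm]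
    rfl
  have hF1 : F 1 = 0 := by
    rw [hFval]
    simp only [Real.rpow_one]
    linarith
  have hFp : F p = 0 := by rw [hFval]; linarith
  -- suffices to show F q > 0
  rw [← sub_pos]
  have hgoal : a ^ q + 2 * b ^ q - c ^ q - d ^ q = F q := (hFval q).symm
  have : 0 < F q := by
    by_contra hFq
    push_neg at hFq
    have key : ∀ e : ℝ, e < 0 → Filter.Tendsto (fun t => Real.exp (t * e))
        Filter.atTop (nhds 0) := fun e he =>
      Real.tendsto_exp_atBot.comp (Filter.tendsto_id.atTop_mul_const_of_neg he)
    have hcontF : Continuous F := by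
      simp only [hF]
      fun_prop
    -- F is eventually positive
    obtain ⟨t3, hpt3, hFt3⟩ : ∃ t3, p < t3 ∧ F t3 = 0 := by
      rcases eq_or_lt_of_le hFq with hq0 | hqneg
      · exact ⟨q, hpq, hq0⟩
      · have hlim : Filter.Tendsto (fun t => 2 * Real.exp (t * (β - α))
            - Real.exp (t * (γ - α)) - Real.exp (t * (δ - α)))
            Filter.atTop (nhds 0) := by
          have := (((key (β - α) (by linarith)).const_mul 2).sub
            (key (γ - α) (by linarith))).sub (key (δ - α) (by linarith))
          simpa using this
        have hev : ∀ᶠ T in Filter.atTop, (2 * Real.exp (T * (β - α))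
            - Real.exp (T * (γ - α)) - Real.exp (T * (δ - α))) > -1/2 := by
          have := hlim.eventually (eventually_gt_nhds (show (-1/2 : ℝ) < 0 by norm_num))
          exact this
        obtain ⟨T, hT1, hT2⟩ := (hev.and (Filter.eventually_ge_atTop (q + 1))).exists
        have hTq : q < T := by linarith
        have hFT : 0 < F T := by
          have hexp : ∀ x : ℝ, Real.exp (T * (x - α)) = Real.exp (T * x) / Real.exp (T * α) := by
            intro x
            rw [mul_sub, Real.exp_sub]
          have hpos : 0 < Real.exp (T * α) := Real.exp_pos _
          rw [hexp, hexp, hexp] at hT1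
          have hm := mul_lt_mul_of_pos_right hT1 hpos
          have h2 : -1/2 * Real.exp (T * α) < 2 * Real.exp (T * β)
              - Real.exp (T * γ) - Real.exp (T * δ) := by
            have e1 : (2 * (Real.exp (T * β) / Real.exp (T * α))
                - Real.exp (T * γ) / Real.exp (T * α)
                - Real.exp (T * δ) / Real.exp (T * α)) * Real.exp (T * α)
                = 2 * Real.exp (T * β) - Real.exp (T * γ) - Real.exp (T * δ) := by
              field_simp
            linarith [e1 ▸ hm]
          simp only [hF]
          linarith [h2, hpos]
        obtain ⟨t3, ht3, hFt3⟩ := intermediate_value_Ioo hTq.le hcontF.continuousOn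
          (show (0:ℝ) ∈ Set.Ioo (F q) (F T) from ⟨hqneg, hFT⟩)
        exact ⟨t3, hpq.trans ht3.1, hFt3⟩
    -- divide by exp(t*β)
    set G : ℝ → ℝ := fun t => Real.exp (t * (α - β)) + 2
        - Real.exp (t * (γ - β)) - Real.exp (t * (δ - β)) with hG
    have hGF : ∀ t, G t = F t * Real.exp (-(t * β)) := by
      intro t
      have e : ∀ x : ℝ, Real.exp (t * (x - β)) = Real.exp (t * x) * Real.exp (-(t * β)) := by
        intro x; rw [← Real.exp_add]; ring_nf
      have e2 : Real.exp (t * β) * Real.exp (-(t * β)) = 1 := by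
        rw [← Real.exp_add]; simp
      simp only [hG, hF]
      rw [e, e, e]
      linear_combination (-2 : ℝ) * e2
    have hG1 : G 1 = 0 := by rw [hGF, hF1, zero_mul]
    have hGp : G p = 0 := by rw [hGF, hFp, zero_mul]
    have hGt3 : G t3 = 0 := by rw [hGF, hFt3, zero_mul]
    -- derivative of G
    have hkey : ∀ (e t : ℝ), HasDerivAt (fun s => Real.exp (s * e)) (Real.exp (t * e) * e) t := by
      intro e t
      simpa using HasDerivAt.exp ((hasDerivAt_id t).mul_const e)
    set G' : ℝ → ℝ := fun t => Real.exp (t * (α - β)) * (α - β)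
        - Real.exp (t * (γ - β)) * (γ - β) - Real.exp (t * (δ - β)) * (δ - β) with hG'def
    have hG' : ∀ t, HasDerivAt G (G' t) t := by
      intro t
      exact (((hkey (α - β) t).add_const 2).sub (hkey (γ - β) t)).sub (hkey (δ - β) t)
    obtain ⟨s1, hs1, hG's1⟩ := exists_hasDerivAt_eq_zero hp
      (fun x _ => (hG' x).continuousAt.continuousWithinAt) (hG1.trans hGp.symm)
      (fun x _ => hG' x)
    obtain ⟨s2, hs2, hG's2⟩ := exists_hasDerivAt_eq_zero hpt3
      (fun x _ => (hG' x).continuousAt.continuousWithinAt) (hGp.trans hGt3.symm)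
      (fun x _ => hG' x)
    -- divide G' by exp(t*(α-β))
    set φ : ℝ → ℝ := fun t => (α - β) - Real.exp (t * (γ - α)) * (γ - β)
        - Real.exp (t * (δ - α)) * (δ - β) with hφ
    have hφG' : ∀ t, G' t = Real.exp (t * (α - β)) * φ t := by
      intro t
      have e : ∀ x : ℝ, Real.exp (t * (x - β))
          = Real.exp (t * (α - β)) * Real.exp (t * (x - α)) := by
        intro x; rw [← Real.exp_add]; ring_nf
      simp only [hG'def, hφ]
      rw [e γ, e δ]
      ring
    have hφs1 : φ s1 = 0 := by
      rcases mul_eq_zero.mp ((hφG' s1) ▸ hG's1) with h | h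
      · exact absurd h (Real.exp_ne_zero _)
      · exact h
    have hφs2 : φ s2 = 0 := by
      rcases mul_eq_zero.mp ((hφG' s2) ▸ hG's2) with h | h
      · exact absurd h (Real.exp_ne_zero _)
      · exact h
    -- φ is strictly increasing, contradiction
    have hs12 : s1 < s2 := hs1.2.trans hs2.1
    have e1 : Real.exp (s2 * (γ - α)) < Real.exp (s1 * (γ - α)) :=
      Real.exp_lt_exp.mpr (mul_lt_mul_of_neg_right hs12 (by linarith))
    have e2 : Real.exp (s2 * (δ - α)) < Real.exp (s1 * (δ - α)) :=
      Real.exp_lt_exp.mpr (mul_lt_mul_of_neg_right hs12 (by linarith))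
    have m1 : Real.exp (s2 * (γ - α)) * (γ - β) < Real.exp (s1 * (γ - α)) * (γ - β) :=
      mul_lt_mul_of_pos_right e1 (by linarith)
    have m2 : Real.exp (s2 * (δ - α)) * (δ - β) < Real.exp (s1 * (δ - α)) * (δ - β) :=
      mul_lt_mul_of_pos_right e2 (by linarith)
    simp only [hφ] at hφs1 hφs2
    linarith
  linarith [hgoal ▸ this]

/-- Case 2 replacement: if `0 < b < a < 1` and `2·((a+2b)/2)^p < a^p + 2b^p`, then
`a > 2b` and there exist `c, d` with `0 < b < c < d < a`, `c + d = a + 2b`,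
`c^p + d^p = a^p + 2b^p`, and `c^q + d^q < a^q + 2b^q`. -/
theorem replacement_case_two (p q a b : ℝ) (hp : 1 < p) (hpq : p < q)
    (hb : 0 < b) (hba : b < a) (ha : a < 1)
    (h : 2 * ((a + 2 * b) / 2) ^ p < a ^ p + 2 * b ^ p) :
    2 * b < a ∧
    ∃ c d : ℝ, b < c ∧ c < d ∧ d < a ∧
      c + d = a + 2 * b ∧
      c ^ p + d ^ p = a ^ p + 2 * b ^ p ∧
      c ^ q + d ^ q < a ^ q + 2 * b ^ q := by
  have h2ba : 2 * b < a := part_one hp hb hba h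
  refine ⟨h2ba, ?_⟩
  have ha0 : 0 < a := hb.trans hba
  set s : ℝ := a + 2 * b with hs
  set f : ℝ → ℝ := fun x => x ^ p + (s - x) ^ p with hf
  have hcont : ContinuousOn f (Set.Icc (2 * b) (s / 2)) := by
    apply ContinuousOn.add
    · exact continuousOn_id.rpow_const (fun x _ => Or.inr (by linarith))
    · exact (continuousOn_const.sub continuousOn_id).rpow_const (fun x _ => Or.inr (by linarith))
  have hlt : 2 * b < s / 2 := by rw [hs]; linarith
  have hfhalf : f (s / 2) = 2 * ((a + 2 * b) / 2) ^ p := by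
    have : s - s / 2 = s / 2 := by ring
    simp only [hf, this, hs]
    ring
  have hf2b : f (2 * b) = (2 * b) ^ p + a ^ p := by
    have : s - 2 * b = a := by rw [hs]; ring
    simp only [hf, this]
  have h2p : 2 * b ^ p < (2 * b) ^ p := by
    rw [Real.mul_rpow (by norm_num) hb.le]
    have : (2:ℝ) = 2 ^ (1:ℝ) := (Real.rpow_one 2).symm
    have h21 : (2:ℝ) ^ (1:ℝ) < 2 ^ p := Real.rpow_lt_rpow_of_exponent_lt one_lt_two hp
    have hbp : 0 < b ^ p := Real.rpow_pos_of_pos hb p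
    rw [Real.rpow_one] at h21
    nlinarith
  have hmem : a ^ p + 2 * b ^ p ∈ Set.Ioo (f (s / 2)) (f (2 * b)) := by
    constructor
    · rw [hfhalf]; exact h
    · rw [hf2b]; linarith
  obtain ⟨c, hcmem, hfc⟩ := intermediate_value_Ioo' hlt.le hcont hmem
  set d : ℝ := s - c with hd
  have hc2b : 2 * b < c := hcmem.1
  have hchalf : c < s / 2 := hcmem.2
  have hbc : b < c := by linarith
  have hcd : c < d := by rw [hd]; linarith
  have hda : d < a := by rw [hd, hs]; linarith
  have hsum : c + d = a + 2 * b := by rw [hd, hs]; ring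
  have hpsum : c ^ p + d ^ p = a ^ p + 2 * b ^ p := hfc
  exact ⟨c, d, hbc, hcd, hda, hsum, hpsum,
    part_q hp hpq hb hbc hcd hda ha hsum hpsum⟩
end

section
/- Let p ≥ 2 be an integer, n ≥ 1 an integer, and t ∈ (0,1) a real with n·t ≥ 1. Then over all vectors (w₁,...,wₙ) with Σwᵢ = 1 and 0 ≤ wᵢ ≤ t for all i, the maximum of Σwᵢ^p equals ⌊t⁻¹⌋·t^p + (1 − t·⌊t⁻¹⌋)^p, attained by w₁ = ... = w_{⌊t⁻¹⌋} = t, w_{⌊t⁻¹⌋+1} = 1 − t·⌊t⁻¹⌋, and wⱼ = 0 otherwise. -/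
open Finset

lemma pow_sub_mono' (p : ℕ) {x y d : ℝ} (hy : 0 ≤ y) (hyx : y ≤ x) (hd : 0 ≤ d) :
    (y + d) ^ p - y ^ p ≤ (x + d) ^ p - x ^ p := by
  have key : ∀ z : ℝ, (z + d) ^ p - z ^ p
      = ∑ k ∈ range p, z ^ k * d ^ (p - k) * (p.choose k) := by
    intro z
    rw [add_pow, Finset.sum_range_succ]
    simp
  rw [key, key]
  apply Finset.sum_le_sum
  intro k _
  gcongr


lemma smooth' (p : ℕ) {t α β : ℝ} (hα : 0 ≤ α) (hαt : α ≤ t) (hβ : 0 ≤ β) (hβt : β ≤ t) :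
    α ^ p + β ^ p ≤ (min t (α + β)) ^ p + (α + β - min t (α + β)) ^ p := by
  set c := α + β with hc
  set μ := min t c with hμ
  have hμc : μ ≤ c := min_le_right _ _
  have hμα : α ≤ μ := le_min hαt (by rw [hc]; linarith)
  have hy0 : 0 ≤ c - μ := by linarith
  have hyx : c - μ ≤ α := by
    rcases min_choice t c with h | h
    · rw [hμ, h]; simp [hc]; linarith
    · rw [hμ, h]; linarith
  have h := pow_sub_mono' p hy0 hyx (d := μ - α) (by linarith)
  have e1 : c - μ + (μ - α) = β := by rw [hc]; ring
  have e2 : α + (μ - α) = μ := by ring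
  rw [e1, e2] at h
  linarith

lemma sum_update_erase {ι : Type*} [DecidableEq ι] (s : Finset ι) {a b : ι} (hab : a ≠ b)
    (ha : a ∈ s) (w : ι → ℝ) (v : ℝ) (g : ℝ → ℝ) :
    ∑ i ∈ s.erase b, g (Function.update w a v i)
      = g v + ∑ i ∈ (s.erase a).erase b, g (w i) := by
  have hae : a ∈ s.erase b := Finset.mem_erase.2 ⟨hab, ha⟩
  rw [← Finset.add_sum_erase _ _ hae, Function.update_self,
    show (s.erase b).erase a = (s.erase a).erase b by
      ext x; simp only [Finset.mem_erase]; tauto]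
  congr 1
  exact Finset.sum_congr rfl fun i hi => by
    rw [Function.update_of_ne (Finset.mem_erase.1 (Finset.mem_of_mem_erase hi)).1]

lemma key' {ι : Type*} [DecidableEq ι] (p : ℕ) (hp : 1 ≤ p) {t : ℝ} (ht : 0 < t) :
    ∀ m : ℕ, ∀ (s : Finset ι) (w : ι → ℝ) (k : ℕ) (r : ℝ), s.card ≤ m →
      (∀ i ∈ s, 0 ≤ w i ∧ w i ≤ t) → 0 ≤ r → r ≤ t →
      (∑ i ∈ s, w i) = k * t + r → (∑ i ∈ s, w i ^ p) ≤ k * t ^ p + r ^ p := by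
  intro m
  induction m with
  | zero =>
    intro s w k r hcard hb hr0 hrt hsum
    have hs : s = ∅ := card_eq_zero.mp (Nat.le_zero.mp hcard)
    subst hs
    have h1 : (0:ℝ) ≤ r ^ p := pow_nonneg hr0 p
    have h2 : (0:ℝ) ≤ (k:ℝ) * t ^ p := by positivity
    simp only [sum_empty]
    linarith
  | succ m IH =>
    intro s w k r hcard hb hr0 hrt hsum
    rcases Nat.eq_zero_or_pos k with hk | hk
    · subst hk
      simp only [Nat.cast_zero, zero_mul, zero_add] at hsum ⊢
      calc ∑ i ∈ s, w i ^ p ≤ ∑ i ∈ s, w i * r ^ (p-1) := by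
            apply sum_le_sum
            intro i hi
            have h1 := (hb i hi).1
            have h2 : w i ≤ r := hsum ▸ single_le_sum (fun j hj => (hb j hj).1) hi
            calc w i ^ p = w i * w i ^ (p-1) := by
                  rw [← pow_succ']; congr 1; omega
              _ ≤ w i * r ^ (p-1) :=
                  mul_le_mul_of_nonneg_left (pow_le_pow_left₀ h1 h2 _) h1
        _ = r ^ p := by
            rw [← Finset.sum_mul, hsum, ← pow_succ']; congr 1; omega
    by_cases hcard' : s.card ≤ m
    · exact IH s w k r hcard' hb hr0 hrt hsum
    have hcardeq : s.card = m + 1 := le_antisymm hcard (not_le.1 hcard')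
    rcases eq_or_lt_of_le (show 1 ≤ s.card by omega) with h1 | h2
    · obtain ⟨a, ha⟩ := card_eq_one.mp h1.symm
      subst ha
      simp only [sum_singleton] at hsum ⊢
      have hwa := hb a (mem_singleton_self a)
      have h3 : w a ^ p ≤ t ^ p := pow_le_pow_left₀ hwa.1 hwa.2 p
      have h4 : t^p ≤ (k:ℝ) * t^p := le_mul_of_one_le_left (by positivity)
        (by exact_mod_cast hk)
      have h5 : (0:ℝ) ≤ r^p := pow_nonneg hr0 p
      linarith
    · obtain ⟨a, ha, b, hbm, hab⟩ := one_lt_card.mp h2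
      have hwa := hb a ha
      have hwb := hb b hbm
      have hsm := smooth' p hwa.1 hwa.2 hwb.1 hwb.2
      have herase : (s.erase b).erase a = (s.erase a).erase b := by
        ext x; simp only [mem_erase]; tauto
      have hbe : b ∈ s.erase a := mem_erase.2 ⟨Ne.symm hab, hbm⟩
      have hsplit1 : ∑ i ∈ s, w i = w a + w b + ∑ i ∈ (s.erase a).erase b, w i := by
        rw [← Finset.add_sum_erase _ w ha, ← Finset.add_sum_erase _ w hbe]; ring
      have hsplit2 : ∑ i ∈ s, w i ^ p
          = w a ^ p + w b ^ p + ∑ i ∈ (s.erase a).erase b, w i ^ p := by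
        rw [← Finset.add_sum_erase _ (fun i => w i ^ p) ha,
          ← Finset.add_sum_erase _ (fun i => w i ^ p) hbe]; ring
      by_cases hct : w a + w b ≤ t
      · -- merge into a, drop b
        have hsum1 := sum_update_erase s hab ha w (w a + w b) (fun x => x)
        have hsum2 := sum_update_erase s hab ha w (w a + w b) (fun x => x ^ p)
        have hb' : ∀ i ∈ s.erase b, 0 ≤ Function.update w a (w a + w b) i
            ∧ Function.update w a (w a + w b) i ≤ t := by
          intro i hi
          by_cases hia : i = a
          · subst hia
            rw [Function.update_self]
            exact ⟨add_nonneg hwa.1 hwb.1, hct⟩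
          · rw [Function.update_of_ne hia]
            exact hb i (mem_of_mem_erase hi)
        have hcardm : (s.erase b).card ≤ m := by rw [card_erase_of_mem hbm]; omega
        have hIH := IH (s.erase b) (Function.update w a (w a + w b)) k r hcardm hb' hr0 hrt
          (by rw [hsum1]; linarith)
        rw [min_eq_right hct, sub_self, zero_pow (show p ≠ 0 by omega)] at hsm
        rw [hsum2] at hIH
        linarith
      · -- a becomes t, drop a; b becomes w a + w b - t
        push_neg at hct
        obtain ⟨k', rfl⟩ : ∃ k', k = k' + 1 := ⟨k - 1, by omega⟩
        have hsum1 := sum_update_erase s (Ne.symm hab) hbm w (w a + w b - t) (fun x => x)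
        have hsum2 := sum_update_erase s (Ne.symm hab) hbm w (w a + w b - t) (fun x => x ^ p)
        rw [herase] at hsum1 hsum2
        have hb' : ∀ i ∈ s.erase a, 0 ≤ Function.update w b (w a + w b - t) i
            ∧ Function.update w b (w a + w b - t) i ≤ t := by
          intro i hi
          by_cases hib : i = b
          · subst hib
            rw [Function.update_self]
            constructor <;> linarith [hwa.2, hwb.2]
          · rw [Function.update_of_ne hib]
            exact hb i (mem_of_mem_erase hi)
        have hcardm : (s.erase a).card ≤ m := by rw [card_erase_of_mem ha]; omega
        have hsum' : ∑ i ∈ s.erase a, Function.update w b (w a + w b - t) i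
            = k' * t + r := by
          rw [hsum1]
          push_cast at hsum
          linarith
        have hIH := IH (s.erase a) (Function.update w b (w a + w b - t)) k' r hcardm hb'
          hr0 hrt hsum'
        rw [min_eq_left hct.le] at hsm
        rw [hsum2] at hIH
        push_cast
        linarith


/-- For integer `p ≥ 2`, `n ≥ 1` and `t ∈ (0,1)` with `n·t ≥ 1`, the maximum of
`Σ wᵢ^p` over vectors with `Σ wᵢ = 1` and `0 ≤ wᵢ ≤ t` equals
`⌊t⁻¹⌋·t^p + (1 − t·⌊t⁻¹⌋)^p`, attained by the vector with `⌊t⁻¹⌋` entries equal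
to `t`, one entry equal to `1 − t·⌊t⁻¹⌋` and the rest zero. -/
theorem max_power_sum_bounded_entries (p n : ℕ) (hp : 2 ≤ p) (hn : 1 ≤ n)
    (t : ℝ) (ht : t ∈ Set.Ioo (0:ℝ) 1) (hnt : 1 ≤ (n : ℝ) * t) :
    IsGreatest
      {S : ℝ | ∃ w : Fin n → ℝ, (∀ i, 0 ≤ w i ∧ w i ≤ t) ∧ (∑ i, w i = 1) ∧
        S = ∑ i, (w i) ^ p}
      ((⌊t⁻¹⌋ : ℝ) * t ^ p + (1 - t * (⌊t⁻¹⌋ : ℝ)) ^ p) ∧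
    (∀ i : Fin n, 0 ≤ (if (i : ℤ) < ⌊t⁻¹⌋ then t else
        if (i : ℤ) = ⌊t⁻¹⌋ then 1 - t * (⌊t⁻¹⌋ : ℝ) else 0) ∧
      (if (i : ℤ) < ⌊t⁻¹⌋ then t else
        if (i : ℤ) = ⌊t⁻¹⌋ then 1 - t * (⌊t⁻¹⌋ : ℝ) else 0) ≤ t) ∧
    (∑ i : Fin n, (if (i : ℤ) < ⌊t⁻¹⌋ then t else
        if (i : ℤ) = ⌊t⁻¹⌋ then 1 - t * (⌊t⁻¹⌋ : ℝ) else 0)) = 1 ∧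
    (∑ i : Fin n, (if (i : ℤ) < ⌊t⁻¹⌋ then t else
        if (i : ℤ) = ⌊t⁻¹⌋ then 1 - t * (⌊t⁻¹⌋ : ℝ) else 0) ^ p)
      = (⌊t⁻¹⌋ : ℝ) * t ^ p + (1 - t * (⌊t⁻¹⌋ : ℝ)) ^ p := by

  obtain ⟨ht0, ht1⟩ := ht
  have hinv : 1 < t⁻¹ := (one_lt_inv₀ ht0).mpr ht1
  have hfl0 : 0 ≤ ⌊t⁻¹⌋ := Int.le_floor.mpr (by push_cast; linarith)
  set K : ℕ := ⌊t⁻¹⌋.toNat with hKdef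
  have hKZ : (⌊t⁻¹⌋ : ℤ) = (K : ℤ) := (Int.toNat_of_nonneg hfl0).symm
  have hKR : ((⌊t⁻¹⌋ : ℤ) : ℝ) = (K : ℝ) := by rw [hKZ]; push_cast; ring
  have hfle : ((⌊t⁻¹⌋ : ℤ) : ℝ) ≤ t⁻¹ := Int.floor_le _
  have hflt : t⁻¹ < ((⌊t⁻¹⌋ : ℤ) : ℝ) + 1 := Int.lt_floor_add_one _
  have htt : t⁻¹ * t = 1 := inv_mul_cancel₀ (ne_of_gt ht0)
  have hKt : (K : ℝ) * t ≤ 1 := by rw [← hKR]; nlinarith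
  have hKt1 : 1 < ((K : ℝ) + 1) * t := by rw [← hKR]; nlinarith
  set r : ℝ := 1 - t * (K : ℝ) with hrdef
  have hr0 : 0 ≤ r := by rw [hrdef]; nlinarith
  have hrt : r < t := by rw [hrdef]; nlinarith
  have hKn : K ≤ n := by
    have h : (K : ℝ) ≤ (n : ℝ) := by nlinarith
    exact_mod_cast h
  have hcond : ∀ i : Fin n, (if (i : ℤ) < ⌊t⁻¹⌋ then t else
        if (i : ℤ) = ⌊t⁻¹⌋ then 1 - t * (⌊t⁻¹⌋ : ℝ) else 0)
      = (if (i : ℕ) < K then t else if (i : ℕ) = K then r else 0) := by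
    intro i
    rw [hKR, ← hrdef, hKZ]
    simp only [Nat.cast_lt, Nat.cast_inj]
  have hr_eq0 : ¬ K < n → r = 0 := by
    intro h
    have hKn' : (K : ℝ) = (n : ℝ) := by exact_mod_cast (by omega : K = n)
    rw [hrdef, hKn']
    have : 0 ≤ 1 - t * (n:ℝ) := by rw [hrdef, hKn'] at hr0; exact hr0
    nlinarith
  have hif : ∀ y : ℝ, (¬ K < n → y = 0) → (if K < n then y else 0) = y := by
    intro y h
    by_cases hc : K < n
    · rw [if_pos hc]
    · rw [if_neg hc, h hc]
  have hsum_gen : ∀ x y : ℝ,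
      (∑ i : Fin n, (if (i : ℕ) < K then x else if (i : ℕ) = K then y else 0))
        = (K : ℝ) * x + (if K < n then y else 0) := by
    intro x y
    rw [Fin.sum_univ_eq_sum_range (fun j => if j < K then x else if j = K then y else 0) n]
    have hpt : ∀ j ∈ range n, (if j < K then x else if j = K then y else 0)
        = (if j < K then x else 0) + (if j = K then y else 0) := by
      intro j _
      by_cases h1 : j < K
      · simp [h1, show j ≠ K by omega]
      · by_cases h2 : j = K
        · simp [h1, h2]
        · simp [h1, h2]
    rw [Finset.sum_congr rfl hpt, Finset.sum_add_distrib]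
    congr 1
    · rw [← Finset.sum_subset (Finset.range_subset_range.mpr hKn)
        (fun j _ hj => by rw [if_neg (by simp at hj ⊢; omega)])]
      rw [Finset.sum_congr rfl (fun j hj => if_pos (Finset.mem_range.1 hj)),
        Finset.sum_const, Finset.card_range, nsmul_eq_mul]
    · rw [Finset.sum_ite_eq' (range n) K (fun _ => y)]
      simp
  have hbounds : ∀ i : Fin n, 0 ≤ (if (i : ℤ) < ⌊t⁻¹⌋ then t else
        if (i : ℤ) = ⌊t⁻¹⌋ then 1 - t * (⌊t⁻¹⌋ : ℝ) else 0) ∧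
      (if (i : ℤ) < ⌊t⁻¹⌋ then t else
        if (i : ℤ) = ⌊t⁻¹⌋ then 1 - t * (⌊t⁻¹⌋ : ℝ) else 0) ≤ t := by
    intro i
    rw [hcond i]
    split_ifs
    · exact ⟨ht0.le, le_refl t⟩
    · exact ⟨hr0, hrt.le⟩
    · exact ⟨le_refl 0, ht0.le⟩
  have hsum1 : (∑ i : Fin n, (if (i : ℤ) < ⌊t⁻¹⌋ then t else
      if (i : ℤ) = ⌊t⁻¹⌋ then 1 - t * (⌊t⁻¹⌋ : ℝ) else 0)) = 1 := by
    rw [Finset.sum_congr rfl (fun i _ => hcond i), hsum_gen t r, hif r hr_eq0, hrdef]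
    ring
  have hcondp : ∀ i : Fin n, (if (i : ℤ) < ⌊t⁻¹⌋ then t else
        if (i : ℤ) = ⌊t⁻¹⌋ then 1 - t * (⌊t⁻¹⌋ : ℝ) else 0) ^ p
      = (if (i : ℕ) < K then t ^ p else if (i : ℕ) = K then r ^ p else 0) := by
    intro i
    rw [hcond i]
    split_ifs
    · rfl
    · rfl
    · exact zero_pow (by omega)
  have hsum2 : (∑ i : Fin n, (if (i : ℤ) < ⌊t⁻¹⌋ then t else
        if (i : ℤ) = ⌊t⁻¹⌋ then 1 - t * (⌊t⁻¹⌋ : ℝ) else 0) ^ p)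
      = (⌊t⁻¹⌋ : ℝ) * t ^ p + (1 - t * (⌊t⁻¹⌋ : ℝ)) ^ p := by
    rw [Finset.sum_congr rfl (fun i _ => hcondp i), hsum_gen (t ^ p) (r ^ p),
      hif (r ^ p) (fun h => by rw [hr_eq0 h]; exact zero_pow (by omega)), hKR, ← hrdef]
  refine ⟨⟨⟨_, hbounds, hsum1, hsum2.symm⟩, ?_⟩, hbounds, hsum1, hsum2⟩
  rintro S ⟨w, hw, hwsum, rfl⟩
  have hkey := key' (ι := Fin n) p (by omega) ht0 n Finset.univ w K r
    (le_of_eq (by simp)) (fun i _ => hw i) hr0 hrt.le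
    (by rw [hwsum, hrdef]; ring)
  rw [hKR, ← hrdef]
  exact hkey
end

section
/- Let q > p > 1 be reals. Then f_{p,q} is a strictly increasing continuous function on [0,1], where f_{p,q}(0) = 0 and f_{p,q}(⌊z⁻¹⌋z^p + (1−⌊z⁻¹⌋z)^p) = ⌊z⁻¹⌋z^q + (1−⌊z⁻¹⌋z)^q for z ∈ (0,1]. -/
open Set

noncomputable def phiAux (n : ℕ) (p z : ℝ) : ℝ := (n:ℝ) * z ^ p + (1 - (n:ℝ)*z) ^ p

lemma phi_hasDerivAt (n : ℕ) {p : ℝ} (hp : 1 ≤ p) (z : ℝ) :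
    HasDerivAt (phiAux n p) ((n:ℝ)*p*(z^(p-1) - (1-(n:ℝ)*z)^(p-1))) z := by
  have h1 : HasDerivAt (fun z : ℝ => 1 - (n:ℝ)*z) (-(n:ℝ)) z := by
    simpa using ((hasDerivAt_id z).const_mul (n:ℝ)).const_sub 1
  have h2 : HasDerivAt (fun z : ℝ => (1 - (n:ℝ)*z) ^ p)
      (p * (1-(n:ℝ)*z)^(p-1) * (-(n:ℝ))) z :=
    (Real.hasDerivAt_rpow_const (Or.inr hp)).comp z h1
  have h3 : HasDerivAt (fun z : ℝ => (n:ℝ) * z ^ p) ((n:ℝ) * (p * z^(p-1))) z :=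
    (Real.hasDerivAt_rpow_const (Or.inr hp)).const_mul (n:ℝ)
  have := h3.add h2
  exact this.congr_deriv (by ring)

lemma phi_continuous (n : ℕ) {p : ℝ} (hp : 1 ≤ p) : Continuous (phiAux n p) :=
  continuous_iff_continuousAt.2 fun z => (phi_hasDerivAt n hp z).continuousAt

lemma phi_strictMonoOn {n : ℕ} (hn : 1 ≤ n) {p : ℝ} (hp : 1 < p) :
    StrictMonoOn (phiAux n p) (Icc (1/(n+1:ℝ)) (1/(n:ℝ))) := by
  have hnp : (0:ℝ) < n := by exact_mod_cast hn
  apply strictMonoOn_of_deriv_pos (convex_Icc _ _) (phi_continuous n hp.le).continuousOn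
  intro z hz
  rw [interior_Icc] at hz
  rw [(phi_hasDerivAt n hp.le z).deriv]
  have hz0 : 0 < z := lt_trans (by positivity) hz.1
  have h1 : 0 < 1 - (n:ℝ)*z := by
    have := hz.2
    rw [lt_div_iff₀ hnp] at this
    nlinarith
  have h2 : 1 - (n:ℝ)*z < z := by
    have := hz.1
    rw [div_lt_iff₀ (by positivity)] at this
    nlinarith
  have := Real.rpow_lt_rpow h1.le h2 (by linarith : 0 < p - 1)
  have hn1 : (0:ℝ) < (n:ℝ)*p := by positivity
  nlinarith

lemma phi_left (n : ℕ) {p : ℝ} (hp : 0 < p) :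
    phiAux n p (1/(n+1:ℝ)) = ((n:ℝ)+1) ^ (1-p) := by
  have h0 : (0:ℝ) < (n:ℝ)+1 := by positivity
  unfold phiAux
  have e2 : 1 - (n:ℝ) * (1/(n+1:ℝ)) = 1/(n+1:ℝ) := by field_simp; ring
  rw [e2, Real.rpow_sub h0, Real.rpow_one, Real.div_rpow (by norm_num) h0.le, Real.one_rpow]
  ring

lemma phi_right {n : ℕ} (hn : 1 ≤ n) {p : ℝ} (hp : 0 < p) :
    phiAux n p (1/(n:ℝ)) = (n:ℝ) ^ (1-p) := by
  have h0 : (0:ℝ) < (n:ℝ) := by exact_mod_cast hn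
  unfold phiAux
  have e2 : 1 - (n:ℝ) * (1/(n:ℝ)) = 0 := by field_simp; ring
  rw [e2, Real.zero_rpow hp.ne', Real.rpow_sub h0, Real.rpow_one,
    Real.div_rpow (by norm_num) h0.le, Real.one_rpow]
  ring


noncomputable def ggAux (p z : ℝ) : ℝ :=
  (⌊z⁻¹⌋ : ℝ) * z ^ p + (1 - (⌊z⁻¹⌋ : ℝ) * z) ^ p

noncomputable def GAux (p z : ℝ) : ℝ := if z = 0 then 0 else ggAux p z

lemma floorInv_eq {n : ℕ} (hn : 1 ≤ n) {z : ℝ} (h1 : 1/(n+1:ℝ) < z) (h2 : z ≤ 1/(n:ℝ)) :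
    ⌊z⁻¹⌋ = (n:ℤ) := by
  have hnp : (0:ℝ) < n := by positivity
  have hz : 0 < z := lt_trans (by positivity) h1
  rw [Int.floor_eq_iff]
  constructor
  · push_cast
    rw [le_inv_comm₀ hnp hz] at *
    · simpa [one_div] using h2
  · push_cast
    have : z⁻¹ < n+1 := by
      rw [inv_lt_comm₀ hz (by positivity)]
      simpa [one_div] using h1
    simpa using this

lemma ggAux_eq_phi {n : ℕ} (hn : 1 ≤ n) {p : ℝ} (hp : 0 < p) {z : ℝ}
    (hz : z ∈ Icc (1/(n+1:ℝ)) (1/(n:ℝ))) : ggAux p z = phiAux n p z := by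
  rcases eq_or_lt_of_le hz.1 with h | h
  · -- z = 1/(n+1)
    subst h
    have h1 : (1/(n+1:ℝ))⁻¹ = ((n:ℝ)+1) := by
      rw [one_div, inv_inv]
    have hfl : ⌊(1/(n+1:ℝ))⁻¹⌋ = (n:ℤ)+1 := by
      rw [h1]; exact_mod_cast Int.floor_natCast (n+1)
    unfold ggAux phiAux
    rw [hfl]
    push_cast
    have e1 : 1 - ((n:ℝ)+1) * (1/(n+1:ℝ)) = 0 := by field_simp; ring
    have e2 : 1 - (n:ℝ) * (1/(n+1:ℝ)) = 1/(n+1:ℝ) := by field_simp; ring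
    rw [e1, e2, Real.zero_rpow hp.ne']
    ring
  · unfold ggAux phiAux
    rw [floorInv_eq hn h hz.2]
    push_cast
    ring



lemma mem_piece {z : ℝ} (hz : z ∈ Ioc (0:ℝ) 1) :
    ∃ n : ℕ, 1 ≤ n ∧ ⌊z⁻¹⌋ = (n:ℤ) ∧ 1/(n+1:ℝ) < z ∧ z ≤ 1/(n:ℝ) := by
  have hz0 : 0 < z := hz.1
  have h1 : (1:ℝ) ≤ z⁻¹ := (one_le_inv₀ hz0).2 hz.2
  have hfl1 : 1 ≤ ⌊z⁻¹⌋ := by exact_mod_cast Int.le_floor.2 (by exact_mod_cast h1)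
  refine ⟨⌊z⁻¹⌋.toNat, ?_, ?_, ?_, ?_⟩
  · omega
  · omega
  · have e : ((⌊z⁻¹⌋.toNat : ℕ) : ℝ) = ((⌊z⁻¹⌋ : ℤ) : ℝ) := by
      exact_mod_cast Int.toNat_of_nonneg (by omega : (0:ℤ) ≤ ⌊z⁻¹⌋)
    have h2 : z⁻¹ < (⌊z⁻¹⌋.toNat : ℝ) + 1 := by
      rw [e]; exact Int.lt_floor_add_one z⁻¹
    rw [div_lt_iff₀ (by positivity), ← div_lt_iff₀' hz0, div_eq_mul_inv, one_mul]
    linarith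
  · have e : ((⌊z⁻¹⌋.toNat : ℕ) : ℝ) = ((⌊z⁻¹⌋ : ℤ) : ℝ) := by
      exact_mod_cast Int.toNat_of_nonneg (by omega : (0:ℤ) ≤ ⌊z⁻¹⌋)
    have h3 : ((⌊z⁻¹⌋.toNat : ℝ)) ≤ z⁻¹ := by
      rw [e]; exact Int.floor_le z⁻¹
    have hn0 : (0:ℝ) < (⌊z⁻¹⌋.toNat : ℝ) := by
      have : (1:ℕ) ≤ ⌊z⁻¹⌋.toNat := by omega
      exact_mod_cast this
    rw [le_div_iff₀ hn0, ← le_div_iff₀' hz0, div_eq_mul_inv, one_mul]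
    linarith

lemma ggAux_lt_ggAux {p : ℝ} (hp : 1 < p) {z w : ℝ} (hz : z ∈ Ioc (0:ℝ) 1)
    (hw : w ∈ Ioc (0:ℝ) 1) (hzw : z < w) : ggAux p z < ggAux p w := by
  obtain ⟨n, hn1, hnf, hnl, hnr⟩ := mem_piece hz
  obtain ⟨m, hm1, hmf, hml, hmr⟩ := mem_piece hw
  have hp0 : (0:ℝ) < p := by linarith
  have hzI : z ∈ Icc (1/(n+1:ℝ)) (1/(n:ℝ)) := ⟨hnl.le, hnr⟩
  have hwI : w ∈ Icc (1/(m+1:ℝ)) (1/(m:ℝ)) := ⟨hml.le, hmr⟩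
  have hmn : m ≤ n := by
    have : (m:ℤ) ≤ (n:ℤ) := by
      rw [← hnf, ← hmf]
      exact Int.floor_le_floor (inv_anti₀ hz.1 hzw.le)
    exact_mod_cast this
  rw [ggAux_eq_phi hn1 hp0 hzI, ggAux_eq_phi hm1 hp0 hwI]
  rcases eq_or_lt_of_le hmn with h | h
  · subst h
    exact phi_strictMonoOn hn1 hp hzI hwI hzw
  · -- m < n
    have h1 : phiAux n p z ≤ phiAux n p (1/(n:ℝ)) := by
      rcases eq_or_lt_of_le hnr with h' | h'
      · rw [h']
      · exact (phi_strictMonoOn hn1 hp hzI (right_mem_Icc.2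
          (one_div_le_one_div_of_le (by exact_mod_cast hn1) (by push_cast; linarith))) h').le
    have h2 : phiAux m p (1/(m+1:ℝ)) < phiAux m p w :=
      phi_strictMonoOn hm1 hp (left_mem_Icc.2
          (one_div_le_one_div_of_le (by exact_mod_cast hm1) (by push_cast; linarith))) hwI hml
    rw [phi_right hn1 hp0] at h1
    rw [phi_left m hp0] at h2
    have h3 : (n:ℝ) ^ (1-p) ≤ ((m:ℝ)+1) ^ (1-p) := by
      apply Real.rpow_le_rpow_of_nonpos (by positivity) (by push_cast; exact_mod_cast (by omega : m+1 ≤ n)) (by linarith)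
    linarith


lemma ggAux_pos {p : ℝ} (hp : 0 < p) {z : ℝ} (hz : z ∈ Ioc (0:ℝ) 1) : 0 < ggAux p z := by
  obtain ⟨n, hn1, hnf, hnl, hnr⟩ := mem_piece hz
  unfold ggAux
  rw [hnf]
  push_cast
  have h1 : 0 < (n:ℝ) * z ^ p := by
    have : (0:ℝ) < n := by exact_mod_cast hn1
    have := Real.rpow_pos_of_pos hz.1 p
    positivity
  have h2 : 0 ≤ (1 - (n:ℝ)*z) ^ p := Real.rpow_nonneg (by
    rw [le_div_iff₀ (by exact_mod_cast hn1 : (0:ℝ) < n)] at hnr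
    linarith) _
  linarith

lemma ggAux_le {p : ℝ} (hp : 1 < p) {z : ℝ} (hz : z ∈ Ioc (0:ℝ) 1) :
    ggAux p z ≤ z ^ (p-1) + z ^ p := by
  obtain ⟨n, hn1, hnf, hnl, hnr⟩ := mem_piece hz
  have hz0 : 0 < z := hz.1
  have hn0 : (0:ℝ) < n := by exact_mod_cast hn1
  have hnz1 : (n:ℝ) * z ≤ 1 := by rw [le_div_iff₀ hn0] at hnr; linarith
  have hnz2 : 1 - (n:ℝ)*z ≤ z := by
    rw [div_lt_iff₀ (by positivity)] at hnl; nlinarith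
  unfold ggAux
  rw [hnf]
  push_cast
  have e1 : z ^ p = z ^ (p-1) * z := by
    rw [show p = p-1+1 by ring, Real.rpow_add_one hz0.ne' (p-1)]
    ring_nf
  have h1 : (n:ℝ) * z ^ p ≤ z ^ (p-1) := by
    rw [e1]
    calc (n:ℝ) * (z ^ (p-1) * z) = ((n:ℝ)*z) * z ^ (p-1) := by ring
    _ ≤ 1 * z ^ (p-1) := by
        apply mul_le_mul_of_nonneg_right hnz1 (Real.rpow_nonneg hz0.le _)
    _ = z ^ (p-1) := one_mul _
  have h2 : (1 - (n:ℝ)*z) ^ p ≤ z ^ p :=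
    Real.rpow_le_rpow (by linarith) hnz2 (by linarith)
  linarith

noncomputable def GG (p z : ℝ) : ℝ := if z = 0 then 0 else ggAux p z

lemma GG_zero (p : ℝ) : GG p 0 = 0 := by simp [GG]

lemma GG_of_pos {p z : ℝ} (hz : 0 < z) : GG p z = ggAux p z := by
  simp [GG, hz.ne']

lemma GG_one {p : ℝ} (hp : 0 < p) : GG p 1 = 1 := by
  rw [GG_of_pos one_pos]
  unfold ggAux
  norm_num [Real.zero_rpow hp.ne']

lemma GG_strictMonoOn {p : ℝ} (hp : 1 < p) : StrictMonoOn (GG p) (Icc (0:ℝ) 1) := by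
  intro x hx y hy hxy
  rcases eq_or_lt_of_le hx.1 with h0 | h0
  · rw [← h0, GG_zero, GG_of_pos (h0 ▸ hxy)]
    exact ggAux_pos (by linarith) ⟨h0 ▸ hxy, hy.2⟩
  · rw [GG_of_pos h0, GG_of_pos (lt_trans h0 hxy)]
    exact ggAux_lt_ggAux hp ⟨h0, hx.2⟩ ⟨lt_trans h0 hxy, hy.2⟩ hxy

lemma GG_continuousOn {p : ℝ} (hp : 1 < p) : ContinuousOn (GG p) (Icc (0:ℝ) 1) := by
  intro x hx
  rcases eq_or_lt_of_le hx.1 with h0 | h0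
  · -- x = 0
    subst h0
    have hb : ∀ y ∈ Icc (0:ℝ) 1, GG p y ∈ Icc (0:ℝ) (y ^ (p-1) + y ^ p) := by
      intro y hy
      rcases eq_or_lt_of_le hy.1 with h | h
      · subst h
        constructor
        · rw [GG_zero]
        · rw [GG_zero]
          have := Real.rpow_nonneg (le_refl (0:ℝ)) (p-1)
          have := Real.rpow_nonneg (le_refl (0:ℝ)) p
          linarith
      · rw [GG_of_pos h]
        exact ⟨(ggAux_pos (by linarith) ⟨h, hy.2⟩).le, ggAux_le hp ⟨h, hy.2⟩⟩
    have htend : Filter.Tendsto (fun y : ℝ => y ^ (p-1) + y ^ p) (nhdsWithin 0 (Icc (0:ℝ) 1)) (nhds 0) := by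
      have c1 : ContinuousAt (fun y : ℝ => y ^ (p-1)) 0 :=
        Real.continuousAt_rpow_const 0 (p-1) (Or.inr (by linarith))
      have c2 : ContinuousAt (fun y : ℝ => y ^ p) 0 :=
        Real.continuousAt_rpow_const 0 p (Or.inr (by linarith))
      have h00 : (fun y:ℝ => y ^ (p-1) + y ^ p) 0 = 0 := by
        simp [Real.zero_rpow (by intro h; rw [sub_eq_zero] at h; linarith : p - 1 ≠ 0),
          Real.zero_rpow (by linarith : p ≠ 0)]
      have h2 := (c1.add c2).continuousWithinAt (s := Icc (0:ℝ) 1)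
      unfold ContinuousWithinAt at h2
      rw [show ((fun y : ℝ => y ^ (p-1)) + fun y : ℝ => y ^ p) = (fun y:ℝ => y ^ (p-1) + y ^ p) from rfl] at h2
      rwa [h00] at h2
    unfold ContinuousWithinAt
    rw [GG_zero]
    apply tendsto_of_tendsto_of_tendsto_of_le_of_le' tendsto_const_nhds htend
    · filter_upwards [self_mem_nhdsWithin] with y hy using (hb y hy).1
    · filter_upwards [self_mem_nhdsWithin] with y hy using (hb y hy).2
  · -- x > 0
    have key : ∀ (n : ℕ), 1 ≤ n → ∀ y ∈ Icc (1/(n+1:ℝ)) (1/(n:ℝ)),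
        ContinuousWithinAt (GG p) (Icc (1/(n+1:ℝ)) (1/(n:ℝ))) y := by
      intro n hn y hy
      apply ((phi_continuous n hp.le).continuousWithinAt).congr
      · intro w hw
        have hw0 : 0 < w := lt_of_lt_of_le (by positivity) hw.1
        rw [GG_of_pos hw0, ggAux_eq_phi hn (by linarith) hw]
      · have hy0 : 0 < y := lt_of_lt_of_le (by positivity) hy.1
        rw [GG_of_pos hy0, ggAux_eq_phi hn (by linarith) hy]
    obtain ⟨n, hn1, hnf, hnl, hnr⟩ := mem_piece ⟨h0, hx.2⟩
    have hn0 : (0:ℝ) < n := by exact_mod_cast hn1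
    rcases eq_or_lt_of_le hnr with heq | hlt
    · -- x = 1/n
      rcases eq_or_lt_of_le hn1 with h1 | h1
      · -- n = 1, x = 1
        apply (key n hn1 x ⟨hnl.le, hnr⟩).mono_of_mem_nhdsWithin
        apply mem_nhdsWithin.2
        refine ⟨Ioi (1/(n+1:ℝ)), isOpen_Ioi, hnl, ?_⟩
        rintro y ⟨hy1, hy2⟩
        refine ⟨le_of_lt hy1, ?_⟩
        have : (n:ℝ) = 1 := by exact_mod_cast h1.symm
        rw [this]; simpa using hy2.2
      · -- n ≥ 2
        have hm1 : 1 ≤ n - 1 := by omega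
        have hcast : ((n - 1 : ℕ) : ℝ) = (n:ℝ) - 1 := by
          push_cast [Nat.cast_sub (by omega : 1 ≤ n)]; ring
        have hn2 : (2:ℝ) ≤ (n:ℝ) := by exact_mod_cast (by omega : (2:ℕ) ≤ n)
        have hx_in : x ∈ Icc (1/((n-1:ℕ)+1:ℝ)) (1/((n-1:ℕ):ℝ)) := by
          rw [hcast]
          constructor
          · rw [show (n:ℝ) - 1 + 1 = (n:ℝ) by ring]; exact heq.ge
          · rw [heq]
            apply one_div_le_one_div_of_le (by linarith) (by linarith)
        have cw := (key n hn1 x ⟨hnl.le, hnr⟩).union (key (n-1) hm1 x hx_in)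
        apply cw.mono_of_mem_nhdsWithin
        apply mem_nhdsWithin_of_mem_nhds
        have hxval : x = 1/(n:ℝ) := heq.symm ▸ rfl
        rw [hcast]
        have hsub : Ioo (1/(n+1:ℝ)) (1/((n:ℝ)-1)) ⊆
            Icc (1/(n+1:ℝ)) (1/(n:ℝ)) ∪ Icc (1/((n:ℝ)-1+1)) (1/((n:ℝ)-1)) := by
          rintro y ⟨hy1, hy2⟩
          rcases le_or_gt y (1/(n:ℝ)) with h | h
          · exact Or.inl ⟨hy1.le, h⟩
          · refine Or.inr ⟨?_, hy2.le⟩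
            rw [show (n:ℝ) - 1 + 1 = (n:ℝ) by ring]
            exact h.le
        apply Filter.mem_of_superset (Ioo_mem_nhds hnl ?_) hsub
        rw [hxval]
        apply one_div_lt_one_div_of_lt (by linarith) (by linarith)
    · -- x < 1/n : interior point
      apply (key n hn1 x ⟨hnl.le, hnr⟩).mono_of_mem_nhdsWithin
      apply mem_nhdsWithin_of_mem_nhds
      apply Filter.mem_of_superset (Ioo_mem_nhds hnl hlt) Ioo_subset_Icc_self


/-- For reals `q > p > 1`, the function `f_{p,q}` (determined by `f 0 = 0` and
`f(⌊z⁻¹⌋z^p + (1−⌊z⁻¹⌋z)^p) = ⌊z⁻¹⌋z^q + (1−⌊z⁻¹⌋z)^q` for `z ∈ (0,1]`) is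
strictly increasing and continuous on `[0,1]`. -/
theorem f_pq_strictMono_continuous (p q : ℝ) (hp : 1 < p) (hpq : p < q)
    (f : ℝ → ℝ) (hf0 : f 0 = 0)
    (hf : ∀ z ∈ Set.Ioc (0:ℝ) 1,
      f ((⌊z⁻¹⌋ : ℝ) * z ^ p + (1 - (⌊z⁻¹⌋ : ℝ) * z) ^ p)
        = (⌊z⁻¹⌋ : ℝ) * z ^ q + (1 - (⌊z⁻¹⌋ : ℝ) * z) ^ q) :
    StrictMonoOn f (Set.Icc 0 1) ∧ ContinuousOn f (Set.Icc 0 1) := by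
  have hq : 1 < q := lt_trans hp hpq
  have Gc := GG_continuousOn hp
  have Gm := GG_strictMonoOn hp
  have Hc := GG_continuousOn hq
  have Hm := GG_strictMonoOn hq
  have hsurj : Icc (0:ℝ) 1 ⊆ GG p '' Icc 0 1 := by
    have := intermediate_value_Icc (by norm_num : (0:ℝ) ≤ 1) Gc
    rwa [GG_zero, GG_one (by linarith)] at this
  have key : ∀ z ∈ Icc (0:ℝ) 1, f (GG p z) = GG q z := by
    intro z hz
    rcases eq_or_lt_of_le hz.1 with h | h
    · rw [← h, GG_zero, GG_zero, hf0]
    · rw [GG_of_pos h, GG_of_pos h]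
      exact hf z ⟨h, hz.2⟩
  constructor
  · intro x hx y hy hxy
    obtain ⟨a, ha, hGa⟩ := hsurj hx
    obtain ⟨b, hb, hGb⟩ := hsurj hy
    have hab : a < b := (Gm.lt_iff_lt ha hb).1 (by rw [hGa, hGb]; exact hxy)
    calc f x = f (GG p a) := by rw [hGa]
    _ = GG q a := key a ha
    _ < GG q b := Hm ha hb hab
    _ = f (GG p b) := (key b hb).symm
    _ = f y := by rw [hGb]
  · have hmaps : MapsTo (GG p) (Icc (0:ℝ) 1) (Icc (0:ℝ) 1) := by
      intro z hz
      constructor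
      · have := Gm.monotoneOn (left_mem_Icc.2 (by norm_num)) hz hz.1
        rwa [GG_zero] at this
      · have := Gm.monotoneOn hz (right_mem_Icc.2 (by norm_num)) hz.2
        rwa [GG_one (by linarith)] at this
    have hec : Continuous (hmaps.restrict _ _ _) := Gc.mapsToRestrict hmaps
    have hbij : Function.Bijective (hmaps.restrict _ _ _) := by
      constructor
      · intro a b hab
        exact Subtype.ext (Gm.injOn a.2 b.2 (congrArg Subtype.val hab))
      · intro y
        obtain ⟨a, ha, hGa⟩ := hsurj y.2
        exact ⟨⟨a, ha⟩, Subtype.ext hGa⟩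
    let E : Icc (0:ℝ) 1 ≃ Icc (0:ℝ) 1 := Equiv.ofBijective _ hbij
    have hEc : Continuous (E : Icc (0:ℝ) 1 → Icc (0:ℝ) 1) := hec
    let h := hEc.homeoOfEquivCompactToT2
    rw [continuousOn_iff_continuous_restrict]
    have heq : restrict (Icc (0:ℝ) 1) f = (restrict (Icc (0:ℝ) 1) (GG q)) ∘ h.symm := by
      funext x
      have h2 : GG p ((h.symm x : Icc (0:ℝ) 1) : ℝ) = (x:ℝ) := by
        have := E.apply_symm_apply x
        exact congrArg Subtype.val this
      show f (x:ℝ) = GG q ((h.symm x : Icc (0:ℝ) 1) : ℝ)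
      rw [← h2]
      exact key _ (h.symm x).2
    rw [show (Icc (0:ℝ) 1).domRestrict f = restrict (Icc (0:ℝ) 1) f from rfl, heq]
    exact (continuousOn_iff_continuous_restrict.1 Hc).comp h.symm.continuous
end

section
/- Let ℓ ≥ 4 and n ≥ 1 be integers and let x₁,...,xₙ be nonnegative reals with Σᵢ xᵢ = 1/2. Then Σᵢ xᵢ^ℓ ≥ g_ℓ(Σᵢ xᵢ³), where g_ℓ : [0,1/8] → [0,1] is defined by g_ℓ(0)=0 and g_ℓ((⌊z⁻¹⌋z³ + (1−⌊z⁻¹⌋z)³)/8) = (⌊z⁻¹⌋z^ℓ + (1−⌊z⁻¹⌋z)^ℓ)/2^ℓ for z ∈ (0,1]. -/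
open Finset

/-- Power sums of two variables in terms of sum `s` and product `p`:
`NN k (x+y) (x*y) = x^k + y^k`. -/
noncomputable def NN : ℕ → ℝ → ℝ → ℝ
  | 0, _, _ => 2
  | 1, s, _ => s
  | (k+2), s, p => s * NN (k+1) s p - p * NN k s p

/-- Partial derivative of `NN k` with respect to `s`. -/
noncomputable def AA : ℕ → ℝ → ℝ → ℝ
  | 0, _, _ => 0
  | 1, _, _ => 1
  | (k+2), s, p => NN (k+1) s p + s * AA (k+1) s p - p * AA k s p

/-- Partial derivative of `NN k` with respect to `p`. -/
noncomputable def BB : ℕ → ℝ → ℝ → ℝ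
  | 0, _, _ => 0
  | 1, _, _ => 0
  | (k+2), s, p => s * BB (k+1) s p - NN k s p - p * BB k s p

lemma NN_add (x y : ℝ) : ∀ k : ℕ, NN k (x+y) (x*y) = x^k + y^k := by
  intro k
  induction k using Nat.twoStepInduction with
  | zero => norm_num [NN]
  | one => simp [NN]
  | more k ih1 ih2 => simp only [NN, ih1, ih2]; ring

lemma NN_hasDerivAt (k : ℕ) {f g : ℝ → ℝ} {f' g' t : ℝ}
    (hf : HasDerivAt f f' t) (hg : HasDerivAt g g' t) :
    HasDerivAt (fun h => NN k (f h) (g h))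
      (AA k (f t) (g t) * f' + BB k (f t) (g t) * g') t := by
  induction k using Nat.twoStepInduction with
  | zero => simpa [NN, AA, BB] using hasDerivAt_const t (2:ℝ)
  | one => simpa [NN, AA, BB] using hf
  | more k ih1 ih2 =>
      have h1 : HasDerivAt (fun h => f h * NN (k+1) (f h) (g h) - g h * NN k (f h) (g h))
          (f' * NN (k+1) (f t) (g t) +
            f t * (AA (k+1) (f t) (g t) * f' + BB (k+1) (f t) (g t) * g') -
           (g' * NN k (f t) (g t) +
            g t * (AA k (f t) (g t) * f' + BB k (f t) (g t) * g'))) t :=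
        (hf.mul ih2).sub (hg.mul ih1)
      have : (fun h => NN (k+2) (f h) (g h))
          = fun h => f h * NN (k+1) (f h) (g h) - g h * NN k (f h) (g h) := by
        funext h; simp [NN]
      rw [this]
      convert h1 using 1
      simp only [AA, BB, NN]; ring

lemma AA_val (x y : ℝ) : ∀ k : ℕ,
    AA (k+1) (x+y) (x*y) * (x - y) = ((k:ℝ)+1) * (x^(k+1) - y^(k+1)) := by
  intro k
  induction k using Nat.twoStepInduction with
  | zero => norm_num [AA]
  | one => simp only [AA, NN]; push_cast; ring
  | more k ih1 ih2 =>
      have hN : NN (k+2) (x+y) (x*y) = x^(k+2) + y^(k+2) := NN_add x y (k+2)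
      show (NN (k+2) (x+y) (x*y) + (x+y) * AA (k+2) (x+y) (x*y)
        - x*y * AA (k+1) (x+y) (x*y)) * (x-y) = _
      push_cast at ih1 ih2 ⊢
      linear_combination (x+y) * ih2 - x*y * ih1 + (x-y) * hN

lemma BB_val (x y : ℝ) : ∀ k : ℕ,
    BB (k+1) (x+y) (x*y) * (x - y) = -(((k:ℝ)+1)) * (x^k - y^k) := by
  intro k
  induction k using Nat.twoStepInduction with
  | zero => norm_num [BB]
  | one => simp only [BB, NN]; push_cast; ring
  | more k ih1 ih2 =>
      have hN : NN (k+1) (x+y) (x*y) = x^(k+1) + y^(k+1) := NN_add x y (k+1)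
      show ((x+y) * BB (k+2) (x+y) (x*y) - NN (k+1) (x+y) (x*y)
        - x*y * BB (k+1) (x+y) (x*y)) * (x-y) = _
      push_cast at ih1 ih2 ⊢
      linear_combination (x+y) * ih2 - x*y * ih1 - (x-y) * hN

lemma AA_eq (x : ℝ) : ∀ k : ℕ, AA (k+1) (x+x) (x*x) = (((k:ℝ)+1))^2 * x^k := by
  intro k
  induction k using Nat.twoStepInduction with
  | zero => norm_num [AA]
  | one => simp only [AA, NN]; push_cast; ring
  | more k ih1 ih2 =>
      have hN : NN (k+2) (x+x) (x*x) = x^(k+2) + x^(k+2) := NN_add x x (k+2)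
      show NN (k+2) (x+x) (x*x) + (x+x) * AA (k+2) (x+x) (x*x)
        - x*x * AA (k+1) (x+x) (x*x) = _
      push_cast at ih1 ih2 ⊢
      linear_combination hN + (x+x) * ih2 - x*x*ih1

lemma BB_eq (x : ℝ) : ∀ k : ℕ, BB (k+2) (x+x) (x*x) = -(((k:ℝ)+2)*((k:ℝ)+1)) * x^k := by
  intro k
  induction k using Nat.twoStepInduction with
  | zero => norm_num [BB, NN]
  | one => simp only [BB, NN]; push_cast; ring
  | more k ih1 ih2 =>
      have hN : NN (k+2) (x+x) (x*x) = x^(k+2) + x^(k+2) := NN_add x x (k+2)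
      show (x+x) * BB (k+3) (x+x) (x*x) - NN (k+2) (x+x) (x*x)
        - x*x * BB (k+2) (x+x) (x*x) = _
      push_cast at ih1 ih2 ⊢
      linear_combination (x+x) * ih2 - x*x*ih1 - hN

/-- Strict generalized-Vandermonde positivity used for the three-distinct-values
perturbation: for `0 ≤ d < b < a` and `m : ℕ`,
`a^(m+3)(b²−d²) + b^(m+3)(d²−a²) + d^(m+3)(a²−b²) > 0`. -/
lemma T_pos (m : ℕ) {a b d : ℝ} (hd : 0 ≤ d) (hdb : d < b) (hba : b < a) :
    0 < a^(m+3) * (b^2 - d^2) + b^(m+3) * (d^2 - a^2) + d^(m+3) * (a^2 - b^2) := by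
  have hb : 0 < b := lt_of_le_of_lt hd hdb
  have ha : 0 < a := lt_trans hb hba
  have hZY : d^2 < b^2 := by nlinarith
  have hYX : b^2 < a^2 := by nlinarith
  have hXZ : (0:ℝ) < a^2 - d^2 := by nlinarith
  have hq1 : 1 < ((m:ℝ)+3)/2 := by
    have : (0:ℝ) ≤ (m:ℝ) := Nat.cast_nonneg m
    linarith
  have hconv := strictConvexOn_rpow hq1
  have hlam0 : 0 < (b^2 - d^2)/(a^2 - d^2) := div_pos (by linarith) hXZ
  have hmu0 : 0 < (a^2 - b^2)/(a^2 - d^2) := div_pos (by linarith) hXZ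
  have hsum : (b^2 - d^2)/(a^2 - d^2) + (a^2 - b^2)/(a^2 - d^2) = 1 := by
    field_simp
    ring
  have hXmem : a^2 ∈ Set.Ici (0:ℝ) := Set.mem_Ici.mpr (sq_nonneg a)
  have hZmem : d^2 ∈ Set.Ici (0:ℝ) := Set.mem_Ici.mpr (sq_nonneg d)
  have hne : a^2 ≠ d^2 := by nlinarith
  have key := hconv.2 hXmem hZmem hne hlam0 hmu0 hsum
  simp only [smul_eq_mul] at key
  have hcomb : (b^2 - d^2)/(a^2 - d^2) * a^2 + (a^2 - b^2)/(a^2 - d^2) * d^2 = b^2 := by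
    field_simp
    ring
  rw [hcomb] at key
  set q : ℝ := ((m:ℝ)+3)/2 with hq
  have hrp : ∀ c : ℝ, 0 ≤ c → (c^2) ^ q = c ^ (m+3) := by
    intro c hc
    rw [← Real.rpow_natCast c 2, ← Real.rpow_mul hc, ← Real.rpow_natCast c (m+3)]
    congr 1
    rw [hq]
    push_cast
    ring
  rw [hrp a ha.le, hrp b hb.le, hrp d hd] at key
  -- key : b^(m+3) < lam * a^(m+3) + mu * d^(m+3)
  have key2 : b^(m+3) * (a^2 - d^2) < a^(m+3) * (b^2 - d^2) + d^(m+3) * (a^2 - b^2) := by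
    have h2 := mul_lt_mul_of_pos_right key hXZ
    calc b^(m+3) * (a^2 - d^2)
        < ((b^2 - d^2)/(a^2 - d^2) * a^(m+3) + (a^2 - b^2)/(a^2 - d^2) * d^(m+3)) * (a^2 - d^2) := h2
      _ = a^(m+3) * (b^2 - d^2) + d^(m+3) * (a^2 - b^2) := by
          field_simp
  nlinarith [key2]

/-- The inequality driving the `(a, b, b)` perturbation:
`2 a^(m+3) b + (m+1) b^(m+4) > (m+3) a² b^(m+2)` for `0 < b < a`. -/
lemma chi_pos (m : ℕ) {a b : ℝ} (hb : 0 < b) (hba : b < a) :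
    ((m:ℝ)+3) * a^2 * b^(m+2) < 2 * a^(m+3) * b + ((m:ℝ)+1) * b^(m+4) := by
  induction m with
  | zero =>
      have h1 : 0 < a - b := by linarith
      have key : 2*a^(0+3)*b + ((0:ℝ)+1)*b^(0+4) - ((0:ℝ)+3)*a^2*b^(0+2)
          = b*((a-b)^2*(2*a+b)) := by norm_num; ring
      have hpos : 0 < b*((a-b)^2*(2*a+b)) :=
        mul_pos hb (mul_pos (pow_pos h1 2) (by linarith : (0:ℝ) < 2*a+b))
      push_cast
      linarith [key ▸ hpos]
  | succ m ih =>
      have hbIH := mul_lt_mul_of_pos_left ih hb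
      have hpow : b^(m+2) ≤ a^(m+2) := pow_le_pow_left₀ hb.le hba.le (m+2)
      have ha : 0 < a := lt_trans hb hba
      have hextra : 0 < b*(a-b)*(2*a^(m+3) - b^(m+2)*(a+b)) := by
        have h2 : b^(m+2)*(a+b) ≤ a^(m+2)*(a+b) :=
          mul_le_mul_of_nonneg_right hpow (by linarith)
        have h3 : a^(m+2)*(a+b) < 2*a^(m+3) := by
          have h4 : a^(m+2)*(a+b) < a^(m+2)*(2*a) :=
            mul_lt_mul_of_pos_left (by linarith) (pow_pos ha (m+2))
          calc a^(m+2)*(a+b) < a^(m+2)*(2*a) := h4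
            _ = 2*a^(m+3) := by ring
        apply mul_pos (mul_pos hb (by linarith))
        linarith
      have hEq : 2*a^(m+4)*b + ((m:ℝ)+2)*b^(m+5) - ((m:ℝ)+4)*a^2*b^(m+3)
          = (b*(2*a^(m+3)*b + ((m:ℝ)+1)*b^(m+4)) - b*(((m:ℝ)+3)*a^2*b^(m+2)))
            + b*(a-b)*(2*a^(m+3) - b^(m+2)*(a+b)) := by ring
      simp only [show m+1+3 = m+4 from rfl, show m+1+2 = m+3 from rfl,
        show m+1+4 = m+5 from rfl]
      push_cast
      linarith [hbIH, hextra, hEq]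

open Topology Filter Set

/-! ### The perturbation curve: pair `(x, y)` plus a moving coordinate `d`. -/

noncomputable def sig (x y : ℝ) (h : ℝ) : ℝ := x + y - h
noncomputable def qt (x y d : ℝ) (h : ℝ) : ℝ := x^3 + y^3 - ((d+h)^3 - d^3)
noncomputable def pp (x y d : ℝ) (h : ℝ) : ℝ := ((sig x y h)^3 - qt x y d h)/(3 * sig x y h)
noncomputable def DD (x y d : ℝ) (h : ℝ) : ℝ := (sig x y h)^2 - 4 * pp x y d h
noncomputable def FF (m : ℕ) (x y d : ℝ) (h : ℝ) : ℝ :=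
  NN (m+4) (sig x y h) (pp x y d h) + (d+h)^(m+4)

lemma sig_zero (x y : ℝ) : sig x y 0 = x + y := by simp [sig]

lemma pp_zero (x y d : ℝ) (hxy : 0 < x + y) : pp x y d 0 = x * y := by
  have h1 : x + y ≠ 0 := ne_of_gt hxy
  simp only [pp, qt, sig_zero, sig]
  field_simp
  ring

lemma DD_zero (x y d : ℝ) (hxy : 0 < x + y) : DD x y d 0 = (x - y)^2 := by
  simp only [DD, pp_zero x y d hxy, sig_zero]
  ring

lemma hasDerivAt_sig (x y : ℝ) : HasDerivAt (sig x y) (-1) 0 := by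
  have h := (hasDerivAt_id (0:ℝ)).const_sub (x+y); simp at h; exact h

lemma hasDerivAt_qt (x y d : ℝ) : HasDerivAt (qt x y d) (-(3*d^2)) 0 := by
  have h1 : HasDerivAt (fun h : ℝ => d + h) 1 0 := by
    simpa using (hasDerivAt_id (0:ℝ)).const_add d
  have h2 : HasDerivAt (fun h : ℝ => (d+h)^3) (3*d^2) 0 := by
    have := h1.pow 3
    norm_num at this
    exact this
  have h3 : HasDerivAt (fun h : ℝ => (d+h)^3 - d^3) (3*d^2) 0 := h2.sub_const _
  have h := h3.const_sub (x^3+y^3); exact h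

lemma hasDerivAt_pp (x y d : ℝ) (hxy : 0 < x + y) :
    HasDerivAt (pp x y d) ((d^2 + x*y - (x+y)^2)/(x+y)) 0 := by
  have h1 : HasDerivAt (fun h => (sig x y h)^3 - qt x y d h)
      (3*(x+y)^2*(-1) - -(3*d^2)) 0 := by
    have := ((hasDerivAt_sig x y).pow 3).sub (hasDerivAt_qt x y d)
    simp [sig_zero] at this ⊢; exact this
  have h2 : HasDerivAt (fun h => 3 * sig x y h) (3*(-1)) 0 :=
    (hasDerivAt_sig x y).const_mul 3
  have hne : 3 * sig x y 0 ≠ 0 := by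
    rw [sig_zero]; positivity
  have h3 := h1.div h2 hne
  refine h3.congr_deriv ?_
  rw [sig_zero]
  have hq0 : qt x y d 0 = x^3 + y^3 := by simp [qt]
  rw [hq0]
  field_simp
  ring

lemma hasDerivAt_DD (x y d : ℝ) (hxy : 0 < x + y) :
    HasDerivAt (DD x y d) (-2*(x+y) - 4*((d^2 + x*y - (x+y)^2)/(x+y))) 0 := by
  have h1 := ((hasDerivAt_sig x y).pow 2).sub ((hasDerivAt_pp x y d hxy).const_mul 4)
  have : (fun h => (sig x y h)^2 - 4 * pp x y d h) = DD x y d := rfl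
  rw [← this]
  refine h1.congr_deriv ?_
  rw [sig_zero]
  push_cast
  ring

lemma hasDerivAt_FF (m : ℕ) (x y d : ℝ) (hxy : 0 < x + y) :
    HasDerivAt (FF m x y d)
      (AA (m+4) (x+y) (x*y) * (-1)
        + BB (m+4) (x+y) (x*y) * ((d^2 + x*y - (x+y)^2)/(x+y))
        + ((m:ℝ)+4) * d^(m+3)) 0 := by
  have h1 := NN_hasDerivAt (m+4) (hasDerivAt_sig x y) (hasDerivAt_pp x y d hxy)
  rw [sig_zero, pp_zero x y d hxy] at h1
  have h2 : HasDerivAt (fun h : ℝ => (d+h)^(m+4)) (((m:ℝ)+4) * d^(m+3)) 0 := by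
    have hb : HasDerivAt (fun h : ℝ => d + h) 1 0 := by
      simpa using (hasDerivAt_id (0:ℝ)).const_add d
    have h3 := hb.pow (m+4)
    refine h3.congr_deriv ?_
    push_cast
    ring_nf
  exact h1.add h2

/-- If a function vanishes at `0` and has negative derivative there, it is
positive slightly to the left of `0`. -/
lemma eventually_pos_left {D : ℝ → ℝ} {Dd : ℝ} (hD : HasDerivAt D Dd 0)
    (h0 : D 0 = 0) (hneg : Dd < 0) : ∀ᶠ h in 𝓝[<] (0:ℝ), 0 < D h := by
  have hs := hasDerivAt_iff_tendsto_slope.mp hD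
  have hev : ∀ᶠ h in 𝓝[≠] (0:ℝ), slope D 0 h < 0 :=
    hs.eventually (eventually_lt_nhds hneg)
  have hmono : 𝓝[<] (0:ℝ) ≤ 𝓝[≠] (0:ℝ) :=
    nhdsWithin_mono 0 (fun h hh => ne_of_lt hh)
  filter_upwards [hev.filter_mono hmono, self_mem_nhdsWithin] with h hsl hh
  rw [slope_def_field, h0, sub_zero, sub_zero] at hsl
  rcases div_neg_iff.mp hsl with ⟨h1, h2⟩ | ⟨h1, h2⟩
  · exact h1
  · simp only [Set.mem_Iio] at hh; linarith

/-- Core perturbation lemma: if the derivative of the constrained power sum is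
positive and the discriminant stays positive slightly to the left of `0`, then
the triple `(x, y, d)` can be strictly improved keeping the sum and cube-sum. -/
lemma core_improve (m : ℕ) {x y d : ℝ} (hx : 0 < x) (hy : 0 < y) (hd : 0 < d)
    (hE : 0 < AA (m+4) (x+y) (x*y) * (-1)
        + BB (m+4) (x+y) (x*y) * ((d^2 + x*y - (x+y)^2)/(x+y))
        + ((m:ℝ)+4) * d^(m+3))
    (hDev : ∀ᶠ h in 𝓝[<] (0:ℝ), 0 < DD x y d h) :
    ∃ u v w : ℝ, 0 ≤ u ∧ 0 ≤ v ∧ 0 ≤ w ∧ u + v + w = x + y + d ∧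
      u^3 + v^3 + w^3 = x^3 + y^3 + d^3 ∧
      u^(m+4) + v^(m+4) + w^(m+4) < x^(m+4) + y^(m+4) + d^(m+4) := by
  have hxy : 0 < x + y := by linarith
  have hF := hasDerivAt_FF m x y d hxy
  have hs := hasDerivAt_iff_tendsto_slope.mp hF
  have hev : ∀ᶠ h in 𝓝[≠] (0:ℝ), 0 < slope (FF m x y d) 0 h :=
    hs.eventually (eventually_gt_nhds hE)
  have hmono : 𝓝[<] (0:ℝ) ≤ 𝓝[≠] (0:ℝ) :=
    nhdsWithin_mono 0 (fun h hh => ne_of_lt hh)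
  have hsigc : ∀ᶠ h in 𝓝 (0:ℝ), 0 < sig x y h := by
    have hc := (hasDerivAt_sig x y).continuousAt
    have h0 : 0 < sig x y 0 := by rw [sig_zero]; exact hxy
    exact hc.eventually (eventually_gt_nhds h0)
  have hppc : ∀ᶠ h in 𝓝 (0:ℝ), 0 < pp x y d h := by
    have hc := (hasDerivAt_pp x y d hxy).continuousAt
    have h0 : 0 < pp x y d 0 := by rw [pp_zero x y d hxy]; exact mul_pos hx hy
    exact hc.eventually (eventually_gt_nhds h0)
  have hdc : ∀ᶠ h in 𝓝 (0:ℝ), 0 < d + h := by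
    have hc : ContinuousAt (fun h : ℝ => d + h) 0 := by fun_prop
    have h0 : 0 < d + 0 := by linarith
    exact hc.eventually (eventually_gt_nhds h0)
  have hbig : ∀ᶠ h in 𝓝[<] (0:ℝ),
      (0 < slope (FF m x y d) 0 h ∧ 0 < DD x y d h) ∧
      (0 < sig x y h ∧ 0 < pp x y d h ∧ 0 < d + h) ∧ h < 0 := by
    filter_upwards [hev.filter_mono hmono, hDev, hsigc.filter_mono nhdsWithin_le_nhds,
      hppc.filter_mono nhdsWithin_le_nhds, hdc.filter_mono nhdsWithin_le_nhds,
      self_mem_nhdsWithin] with h h1 h2 h3 h4 h5 h6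
    exact ⟨⟨h1, h2⟩, ⟨h3, h4, h5⟩, h6⟩
  obtain ⟨h, ⟨hsl, hDp⟩, ⟨hsp, hpp', hdp⟩, hh0⟩ := hbig.exists
  -- the new values
  set e := Real.sqrt (DD x y d h) with he
  have he0 : 0 ≤ e := Real.sqrt_nonneg _
  have he2 : e^2 = DD x y d h := Real.sq_sqrt hDp.le
  have heles : e ≤ sig x y h := by
    have h1 : DD x y d h ≤ (sig x y h)^2 := by
      simp only [DD]; nlinarith [hpp']
    calc e ≤ Real.sqrt ((sig x y h)^2) := Real.sqrt_le_sqrt h1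
      _ = sig x y h := Real.sqrt_sq hsp.le
  refine ⟨(sig x y h + e)/2, (sig x y h - e)/2, d + h, by linarith, by linarith, by linarith,
    ?_, ?_, ?_⟩
  · simp only [sig]; ring
  · have huv : (sig x y h + e)/2 * ((sig x y h - e)/2) = pp x y d h := by
      have h1 : (sig x y h + e)/2 * ((sig x y h - e)/2) = ((sig x y h)^2 - e^2)/4 := by ring
      rw [h1, he2]
      simp only [DD]
      ring
    have hq : ((sig x y h + e)/2)^3 + ((sig x y h - e)/2)^3 = qt x y d h := by
      have h1 : ((sig x y h + e)/2)^3 + ((sig x y h - e)/2)^3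
          = (sig x y h)^3 - 3 * ((sig x y h + e)/2 * ((sig x y h - e)/2)) * (sig x y h) := by
        ring
      rw [h1, huv]
      have hne : 3 * sig x y h ≠ 0 := by positivity
      simp only [pp]
      field_simp
      ring
    rw [hq]
    simp only [qt]
    ring
  · have huvs : (sig x y h + e)/2 + (sig x y h - e)/2 = sig x y h := by ring
    have huv : (sig x y h + e)/2 * ((sig x y h - e)/2) = pp x y d h := by
      have h1 : (sig x y h + e)/2 * ((sig x y h - e)/2) = ((sig x y h)^2 - e^2)/4 := by ring
      rw [h1, he2]
      simp only [DD]
      ring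
    have hNN := NN_add ((sig x y h + e)/2) ((sig x y h - e)/2) (m+4)
    rw [huvs, huv] at hNN
    have hlt : FF m x y d h < FF m x y d 0 := by
      rw [slope_def_field, sub_zero] at hsl
      rcases div_pos_iff.mp hsl with ⟨h1, h2⟩ | ⟨h1, h2⟩
      · linarith
      · linarith
    have hF0 : FF m x y d 0 = x^(m+4) + y^(m+4) + d^(m+4) := by
      simp only [FF, sig_zero, pp_zero x y d hxy, NN_add x y (m+4), add_zero]
    calc ((sig x y h + e)/2)^(m+4) + ((sig x y h - e)/2)^(m+4) + (d+h)^(m+4)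
        = FF m x y d h := by rw [FF, ← hNN]
      _ < FF m x y d 0 := hlt
      _ = x^(m+4) + y^(m+4) + d^(m+4) := hF0

/-- Main improvement lemma: a triple `0 < d ≤ b < a` can always be strictly
improved while keeping the sum and the sum of cubes. -/
lemma improve (m : ℕ) {a b d : ℝ} (hd : 0 < d) (hdb : d ≤ b) (hba : b < a) :
    ∃ u v w : ℝ, 0 ≤ u ∧ 0 ≤ v ∧ 0 ≤ w ∧ u + v + w = a + b + d ∧
      u^3 + v^3 + w^3 = a^3 + b^3 + d^3 ∧
      u^(m+4) + v^(m+4) + w^(m+4) < a^(m+4) + b^(m+4) + d^(m+4) := by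
  have hb : 0 < b := lt_of_lt_of_le hd hdb
  have ha : 0 < a := lt_trans hb hba
  rcases lt_or_eq_of_le hdb with hdb' | rfl
  · -- three distinct values: pair (a,b), moving d
    have hab : 0 < a - b := by linarith
    have habp : 0 < a + b := by linarith
    have hA := AA_val a b (m+3)
    have hB := BB_val a b (m+3)
    have hT := T_pos m hd.le hdb' hba
    have hE : 0 < AA (m+4) (a+b) (a*b) * (-1)
        + BB (m+4) (a+b) (a*b) * ((d^2 + a*b - (a+b)^2)/(a+b))
        + ((m:ℝ)+4) * d^(m+3) := by
      have hP : (d^2 + a*b - (a+b)^2)/(a+b) * (a+b) = d^2 + a*b - (a+b)^2 :=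
        div_mul_cancel₀ _ (ne_of_gt habp)
      have hkey : (AA (m+4) (a+b) (a*b) * (-1)
          + BB (m+4) (a+b) (a*b) * ((d^2 + a*b - (a+b)^2)/(a+b))
          + ((m:ℝ)+4) * d^(m+3)) * ((a-b)*(a+b))
          = ((m:ℝ)+4) * (a^(m+3) * (b^2 - d^2) + b^(m+3) * (d^2 - a^2)
              + d^(m+3) * (a^2 - b^2)) := by
        have expand : (AA (m+4) (a+b) (a*b) * (-1)
            + BB (m+4) (a+b) (a*b) * ((d^2 + a*b - (a+b)^2)/(a+b))
            + ((m:ℝ)+4) * d^(m+3)) * ((a-b)*(a+b))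
            = (AA (m+4) (a+b) (a*b) * (a-b)) * (-(a+b))
              + (BB (m+4) (a+b) (a*b) * (a-b))
                * ((d^2 + a*b - (a+b)^2)/(a+b) * (a+b))
              + ((m:ℝ)+4) * d^(m+3) * ((a-b)*(a+b)) := by ring
        rw [expand, hP, hA, hB]
        push_cast
        ring
      have h1 : 0 < (AA (m+4) (a+b) (a*b) * (-1)
          + BB (m+4) (a+b) (a*b) * ((d^2 + a*b - (a+b)^2)/(a+b))
          + ((m:ℝ)+4) * d^(m+3)) * ((a-b)*(a+b)) := by
        rw [hkey]
        have : (0:ℝ) < (m:ℝ)+4 := by positivity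
        exact mul_pos this hT
      rcases mul_pos_iff.mp h1 with ⟨hE1, _⟩ | ⟨_, hE2⟩
      · exact hE1
      · exact absurd hE2 (not_lt.mpr (le_of_lt (mul_pos hab habp)))
    have hDev : ∀ᶠ h in 𝓝[<] (0:ℝ), 0 < DD a b d h := by
      have habsum : 0 < a + b := habp
      have hc := (hasDerivAt_DD a b d habsum).continuousAt
      have h0 : 0 < DD a b d 0 := by
        rw [DD_zero a b d habsum]
        positivity
      exact (hc.eventually (eventually_gt_nhds h0)).filter_mono nhdsWithin_le_nhds
    exact core_improve m ha hb hd hE hDev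
  · -- two equal values: pair (d, d), moving a; here b = d
    have hbb : 0 < d + d := by linarith
    have hAe := AA_eq d (m+3)
    have hBe := BB_eq d (m+2)
    have hchi := chi_pos m hd hba
    have hE : 0 < AA (m+4) (d+d) (d*d) * (-1)
        + BB (m+4) (d+d) (d*d) * ((a^2 + d*d - (d+d)^2)/(d+d))
        + ((m:ℝ)+4) * a^(m+3) := by
      have hP : (a^2 + d*d - (d+d)^2)/(d+d) * (d+d) = a^2 + d*d - (d+d)^2 :=
        div_mul_cancel₀ _ (ne_of_gt hbb)
      have hkey : (AA (m+4) (d+d) (d*d) * (-1)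
          + BB (m+4) (d+d) (d*d) * ((a^2 + d*d - (d+d)^2)/(d+d))
          + ((m:ℝ)+4) * a^(m+3)) * (d+d)
          = ((m:ℝ)+4) * (2*a^(m+3)*d + ((m:ℝ)+1)*d^(m+4) - (((m:ℝ)+3)*a^2*d^(m+2))) := by
        have expand : (AA (m+4) (d+d) (d*d) * (-1)
            + BB (m+4) (d+d) (d*d) * ((a^2 + d*d - (d+d)^2)/(d+d))
            + ((m:ℝ)+4) * a^(m+3)) * (d+d)
            = AA (m+4) (d+d) (d*d) * (-(d+d))
              + BB (m+4) (d+d) (d*d) * ((a^2 + d*d - (d+d)^2)/(d+d) * (d+d))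
              + ((m:ℝ)+4) * a^(m+3) * (d+d) := by ring
        rw [expand, hP, hAe, hBe]
        push_cast
        ring
      have h1 : 0 < (AA (m+4) (d+d) (d*d) * (-1)
          + BB (m+4) (d+d) (d*d) * ((a^2 + d*d - (d+d)^2)/(d+d))
          + ((m:ℝ)+4) * a^(m+3)) * (d+d) := by
        rw [hkey]
        have h2 : (0:ℝ) < (m:ℝ)+4 := by positivity
        exact mul_pos h2 (by linarith [hchi])
      rcases mul_pos_iff.mp h1 with ⟨hE1, _⟩ | ⟨_, hE2⟩
      · exact hE1
      · linarith
    have hDev : ∀ᶠ h in 𝓝[<] (0:ℝ), 0 < DD d d a h := by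
      have hDd := hasDerivAt_DD d d a hbb
      have h0 : DD d d a 0 = 0 := by
        rw [DD_zero d d a hbb]; ring
      apply eventually_pos_left hDd h0
      have hP : (a^2 + d*d - (d+d)^2)/(d+d) = (a^2 - 3*d^2)/(2*d) := by
        rw [div_eq_div_iff (ne_of_gt hbb) (by positivity)]
        ring
      rw [hP]
      have hq : -2*(d+d) - 4*((a^2 - 3*d^2)/(2*d)) = (2*(d^2 - a^2))/d := by
        field_simp
        ring
      rw [hq]
      apply div_neg_of_neg_of_pos _ hd
      nlinarith
    obtain ⟨u, v, w, h1, h2, h3, h4, h5, h6⟩ := core_improve m hd hd ha hE hDev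
    exact ⟨u, v, w, h1, h2, h3, by linarith [h4], by linarith [h5], by linarith [h6]⟩

/-- Summing a function applied to a triple update. -/
lemma sum_update3 {n : ℕ} (w : Fin n → ℝ) {i j t : Fin n} (hij : i ≠ j) (hit : i ≠ t)
    (hjt : j ≠ t) (u v r : ℝ) (φ : ℝ → ℝ) :
    ∑ k, φ (Function.update (Function.update (Function.update w i u) j v) t r k)
      = ∑ k, φ (w k) - φ (w i) - φ (w j) - φ (w t) + (φ u + φ v + φ r) := by
  classical
  set v' := Function.update (Function.update (Function.update w i u) j v) t r with hv'
  have hvi : v' i = u := by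
    rw [hv', Function.update_of_ne hit, Function.update_of_ne hij, Function.update_self]
  have hvj : v' j = v := by
    rw [hv', Function.update_of_ne hjt, Function.update_self]
  have hvt : v' t = r := by rw [hv', Function.update_self]
  have hvother : ∀ k, k ≠ i → k ≠ j → k ≠ t → v' k = w k := by
    intro k h1 h2 h3
    rw [hv', Function.update_of_ne h3, Function.update_of_ne h2, Function.update_of_ne h1]
  have hsub : ({i, j, t} : Finset (Fin n)) ⊆ Finset.univ := Finset.subset_univ _
  have hsplit1 := Finset.sum_sdiff (f := fun k => φ (v' k)) hsub
  have hsplit2 := Finset.sum_sdiff (f := fun k => φ (w k)) hsub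
  have hmemj : j ∉ ({t} : Finset (Fin n)) := by simp [hjt]
  have hmemi : i ∉ ({j, t} : Finset (Fin n)) := by simp [hij, hit]
  have hsv : ∑ k ∈ ({i, j, t} : Finset (Fin n)), φ (v' k) = φ u + φ v + φ r := by
    rw [Finset.sum_insert hmemi, Finset.sum_insert hmemj, Finset.sum_singleton,
      hvi, hvj, hvt]
    ring
  have hsw : ∑ k ∈ ({i, j, t} : Finset (Fin n)), φ (w k) = φ (w i) + φ (w j) + φ (w t) := by
    rw [Finset.sum_insert hmemi, Finset.sum_insert hmemj, Finset.sum_singleton]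
    ring
  have hdiff : ∑ k ∈ Finset.univ \ {i, j, t}, φ (v' k)
      = ∑ k ∈ Finset.univ \ {i, j, t}, φ (w k) := by
    apply Finset.sum_congr rfl
    intro k hk
    simp only [Finset.mem_sdiff, Finset.mem_insert, Finset.mem_singleton] at hk
    push_neg at hk
    rw [hvother k hk.2.1 hk.2.2.1 hk.2.2.2]
  calc ∑ k, φ (v' k) = ∑ k ∈ Finset.univ \ {i, j, t}, φ (v' k)
        + ∑ k ∈ ({i, j, t} : Finset (Fin n)), φ (v' k) := hsplit1.symm
    _ = ∑ k ∈ Finset.univ \ {i, j, t}, φ (w k)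
        + (φ u + φ v + φ r) := by rw [hdiff, hsv]
    _ = (∑ k, φ (w k) - (φ (w i) + φ (w j) + φ (w t))) + (φ u + φ v + φ r) := by
        rw [← hsplit2, hsw]; ring
    _ = _ := by ring

/-- Corollary: for `ℓ ≥ 4`, nonnegative reals `x₁,…,xₙ` with `Σ xᵢ = 1/2` satisfy
`Σ xᵢ^ℓ ≥ g_ℓ(Σ xᵢ³)`, where `g_ℓ` is determined by `g_ℓ(0)=0` and
`g_ℓ((⌊z⁻¹⌋z³+(1−⌊z⁻¹⌋z)³)/8) = (⌊z⁻¹⌋z^ℓ+(1−⌊z⁻¹⌋z)^ℓ)/2^ℓ` for `z ∈ (0,1]`. -/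
theorem power_sum_ge_g (ℓ : ℕ) (hℓ : 4 ≤ ℓ) (n : ℕ) (hn : 1 ≤ n) (x : Fin n → ℝ)
    (hx : ∀ i, 0 ≤ x i) (hsum : ∑ i, x i = 1 / 2)
    (g : ℝ → ℝ) (hg0 : g 0 = 0)
    (hg : ∀ z ∈ Set.Ioc (0:ℝ) 1,
      g (((⌊z⁻¹⌋ : ℝ) * z ^ 3 + (1 - (⌊z⁻¹⌋ : ℝ) * z) ^ 3) / 8)
        = ((⌊z⁻¹⌋ : ℝ) * z ^ ℓ + (1 - (⌊z⁻¹⌋ : ℝ) * z) ^ ℓ) / 2 ^ ℓ) :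
    g (∑ i, (x i) ^ 3) ≤ ∑ i, (x i) ^ ℓ := by
  classical
  obtain ⟨m, rfl⟩ : ∃ m, ℓ = m + 4 := ⟨ℓ - 4, by omega⟩
  set c : ℝ := ∑ i, (2 * x i)^3 with hc
  set K : Set (Fin n → ℝ) :=
    {v | (∀ i, 0 ≤ v i) ∧ ∑ i, v i = 1 ∧ ∑ i, (v i)^3 = c} with hK
  have hyK : (fun i => 2 * x i) ∈ K := by
    refine ⟨fun i => by show (0:ℝ) ≤ 2 * x i; have := hx i; linarith, ?_, rfl⟩
    rw [← Finset.mul_sum, hsum]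
    norm_num
  have hsum_cont : Continuous (fun v : Fin n → ℝ => ∑ i, v i) :=
    continuous_finset_sum _ fun i _ => continuous_apply i
  have hcube_cont : Continuous (fun v : Fin n → ℝ => ∑ i, (v i)^3) :=
    continuous_finset_sum _ fun i _ => (continuous_apply i).pow 3
  have hf_cont : Continuous (fun v : Fin n → ℝ => ∑ i, (v i)^(m+4)) :=
    continuous_finset_sum _ fun i _ => (continuous_apply i).pow (m+4)
  -- K is compact
  have hKclosed : IsClosed K := by
    have h1 : IsClosed {v : Fin n → ℝ | ∀ i, 0 ≤ v i} := by
      have he : {v : Fin n → ℝ | ∀ i, 0 ≤ v i} = ⋂ i, {v | 0 ≤ v i} := by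
        ext v; simp
      rw [he]
      exact isClosed_iInter fun i => isClosed_le continuous_const (continuous_apply i)
    have h2 : IsClosed {v : Fin n → ℝ | ∑ i, v i = 1} :=
      isClosed_eq hsum_cont continuous_const
    have h3 : IsClosed {v : Fin n → ℝ | ∑ i, (v i)^3 = c} :=
      isClosed_eq hcube_cont continuous_const
    exact h1.inter (h2.inter h3)
  have hKcompact : IsCompact K := by
    have hpi : IsCompact (Set.pi Set.univ (fun _ : Fin n => Set.Icc (0:ℝ) 1)) :=
      isCompact_univ_pi (fun _ => isCompact_Icc)
    apply hpi.of_isClosed_subset hKclosed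
    intro v hv
    obtain ⟨hv0, hvs, -⟩ := hv
    intro i _
    refine ⟨hv0 i, ?_⟩
    have hs := Finset.single_le_sum (f := v) (fun k _ => hv0 k) (Finset.mem_univ i)
    rw [hvs] at hs
    exact hs
  -- minimiser of the (m+4)-power sum on K
  obtain ⟨w, hwK, hwmin⟩ := hKcompact.exists_isMinOn ⟨_, hyK⟩ hf_cont.continuousOn
  obtain ⟨hw0, hwsum, hwcube⟩ := hwK
  -- maximal coordinate
  obtain ⟨i₀, -, hi₀⟩ := Finset.exists_max_image Finset.univ w
    ⟨⟨0, by omega⟩, Finset.mem_univ _⟩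
  set a := w i₀ with ha
  have hwle : ∀ i, w i ≤ a := fun i => hi₀ i (Finset.mem_univ i)
  have ha0 : 0 < a := by
    by_contra hcon
    push_neg at hcon
    have hle : ∑ i, w i ≤ 0 := Finset.sum_nonpos (fun i _ => le_trans (hwle i) hcon)
    rw [hwsum] at hle
    linarith
  -- no improvable pattern in the minimiser
  have hnopat : ∀ i j t : Fin n, i ≠ j → i ≠ t → j ≠ t →
      0 < w t → w t ≤ w j → w j < w i → False := by
    intro i j t hij hit hjt hwt hwtj hwji
    obtain ⟨u, v, r, hu, hv, hr, hsum3, hcube3, hpow3⟩ := improve m hwt hwtj hwji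
    set v' := Function.update (Function.update (Function.update w i u) j v) t r with hv'
    have hid := sum_update3 w hij hit hjt u v r (fun s => s)
    have hcu := sum_update3 w hij hit hjt u v r (fun s => s^3)
    have hpo := sum_update3 w hij hit hjt u v r (fun s => s^(m+4))
    have hv'K : v' ∈ K := by
      refine ⟨?_, ?_, ?_⟩
      · intro k
        rcases eq_or_ne k t with rfl | hkt
        · rw [hv', Function.update_self]; exact hr
        rcases eq_or_ne k j with rfl | hkj
        · rw [hv', Function.update_of_ne hkt, Function.update_self]; exact hv
        rcases eq_or_ne k i with rfl | hki
        · rw [hv', Function.update_of_ne hkt, Function.update_of_ne hkj,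
            Function.update_self]
          exact hu
        · rw [hv', Function.update_of_ne hkt, Function.update_of_ne hkj,
            Function.update_of_ne hki]
          exact hw0 k
      · rw [← hv'] at hid
        rw [hid, hwsum]
        linarith
      · rw [← hv'] at hcu
        rw [hcu, hwcube]
        linarith
    have hlt : ∑ k, (v' k)^(m+4) < ∑ k, (w k)^(m+4) := by
      rw [← hv'] at hpo
      rw [hpo]
      linarith
    have hge := isMinOn_iff.mp hwmin v' hv'K
    linarith
  -- the set of "middle" coordinates has at most one element
  set B := Finset.univ.filter (fun i => 0 < w i ∧ w i < a) with hB
  have hBcard : B.card ≤ 1 := by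
    by_contra hcard
    push_neg at hcard
    obtain ⟨j, hj, t, ht, hjt⟩ := Finset.one_lt_card.mp hcard
    rw [hB, Finset.mem_filter] at hj ht
    have hji : j ≠ i₀ := fun h => by rw [h] at hj; exact absurd hj.2.2 (lt_irrefl a)
    have hti : t ≠ i₀ := fun h => by rw [h] at ht; exact absurd ht.2.2 (lt_irrefl a)
    rcases le_total (w t) (w j) with hle | hle
    · exact hnopat i₀ j t hji.symm hti.symm hjt ht.2.1 hle hj.2.2
    · exact hnopat i₀ t j hti.symm hji.symm (Ne.symm hjt) hj.2.1 hle ht.2.2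
  -- splitting sums over the minimiser
  set A := Finset.univ.filter (fun i => w i = a) with hA
  set κ := A.card with hκ
  have hsplit : ∀ φ : ℝ → ℝ, φ 0 = 0 →
      ∑ i, φ (w i) = (κ:ℝ) * φ a + ∑ i ∈ B, φ (w i) := by
    intro φ hφ
    rw [← Finset.sum_filter_add_sum_filter_not Finset.univ (fun i => w i = a)
      (fun i => φ (w i))]
    congr 1
    · rw [← hA]
      have hcst : ∑ i ∈ A, φ (w i) = ∑ i ∈ A, φ a := by
        apply Finset.sum_congr rfl
        intro i hi
        rw [hA, Finset.mem_filter] at hi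
        rw [hi.2]
      rw [hcst, Finset.sum_const, nsmul_eq_mul]
    · symm
      apply Finset.sum_subset
      · intro i hi
        rw [hB, Finset.mem_filter] at hi
        rw [Finset.mem_filter]
        exact ⟨Finset.mem_univ i, ne_of_lt hi.2.2⟩
      · intro i hi hiB
        rw [Finset.mem_filter] at hi
        rw [hB, Finset.mem_filter] at hiB
        push_neg at hiB
        have h1 : w i = 0 := by
          rcases lt_or_eq_of_le (hw0 i) with h2 | h2
          · exact absurd (le_antisymm (hwle i) (hiB (Finset.mem_univ i) h2)) hi.2
          · exact h2.symm
        rw [h1, hφ]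
  -- extract the residual value r
  obtain ⟨r, hr0, hra, hsumB⟩ : ∃ r : ℝ, 0 ≤ r ∧ r < a ∧
      ∀ φ : ℝ → ℝ, φ 0 = 0 → ∑ i ∈ B, φ (w i) = φ r := by
    rcases Nat.le_one_iff_eq_zero_or_eq_one.mp hBcard with h0 | h1
    · refine ⟨0, le_refl _, ha0, ?_⟩
      intro φ hφ
      rw [Finset.card_eq_zero.mp h0, Finset.sum_empty, hφ]
    · obtain ⟨j₀, hj₀⟩ := Finset.card_eq_one.mp h1
      have hj₀B : j₀ ∈ B := by rw [hj₀]; exact Finset.mem_singleton_self j₀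
      rw [hB, Finset.mem_filter] at hj₀B
      refine ⟨w j₀, le_of_lt hj₀B.2.1, hj₀B.2.2, ?_⟩
      intro φ hφ
      rw [hj₀, Finset.sum_singleton]
  have hkey : ∀ φ : ℝ → ℝ, φ 0 = 0 → ∑ i, φ (w i) = (κ:ℝ) * φ a + φ r :=
    fun φ hφ => by rw [hsplit φ hφ, hsumB φ hφ]
  have h1 : ∑ i, w i = (κ:ℝ) * a + r := hkey (fun s => s) rfl
  rw [hwsum] at h1
  have h3 : ∑ i, (w i)^3 = (κ:ℝ) * a^3 + r^3 := hkey (fun s => s^3) (by norm_num)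
  rw [hwcube] at h3
  have hp : ∑ i, (w i)^(m+4) = (κ:ℝ) * a^(m+4) + r^(m+4) :=
    hkey (fun s => s^(m+4)) (by simp)
  have ha1 : a ≤ 1 := by
    have hs := Finset.single_le_sum (f := w) (fun k _ => hw0 k) (Finset.mem_univ i₀)
    rw [hwsum] at hs
    exact hs
  have hκ1 : 1 ≤ κ := by
    rw [hκ]
    apply Finset.card_pos.mpr
    exact ⟨i₀, by rw [hA, Finset.mem_filter]; exact ⟨Finset.mem_univ i₀, rfl⟩⟩
  have hfl : ⌊a⁻¹⌋ = (κ:ℤ) := by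
    rw [Int.floor_eq_iff]
    constructor
    · push_cast
      rw [inv_eq_one_div, le_div_iff₀ ha0]
      linarith
    · push_cast
      rw [inv_eq_one_div, div_lt_iff₀ ha0]
      linarith
  have hgz := hg a ⟨ha0, ha1⟩
  rw [hfl] at hgz
  push_cast at hgz
  have hr1 : 1 - (κ:ℝ)*a = r := by linarith
  rw [hr1] at hgz
  have h8 : ∑ i, (2*x i)^3 = 8 * ∑ i, (x i)^3 := by
    rw [Finset.mul_sum]
    apply Finset.sum_congr rfl
    intro i _
    ring
  have harg : ((κ:ℝ)*a^3 + r^3)/8 = ∑ i, (x i)^3 := by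
    rw [← h3, hc, h8]
    ring
  rw [harg] at hgz
  rw [hgz]
  have hmin : ∑ k, (w k)^(m+4) ≤ ∑ k, (2 * x k)^(m+4) :=
    isMinOn_iff.mp hwmin (fun i => 2 * x i) hyK
  have h2p : ∑ k, (2*x k)^(m+4) = 2^(m+4) * ∑ k, (x k)^(m+4) := by
    rw [Finset.mul_sum]
    apply Finset.sum_congr rfl
    intro k _
    rw [mul_pow]
  rw [hp, h2p] at hmin
  rw [div_le_iff₀ (by positivity : (0:ℝ) < 2^(m+4))]
  linarith
end
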